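/- arXiv:1602.01981 — 4 statements merged into one kernel-verified Lean document; each statement's English description precedes it below -/
import Mathlib

section
/- Let R be a commutative Noetherian ring, I_1, ..., I_t ideals of R, and M a finitely generated R-module. Then there exists k ∈ ℕ such that for all (n_1, ..., n_t) with each n_j ≥ k, the set Ass_R(M / (I_1^{n_1} ⋯ I_t^{n_t}) M) is independent of (n_1, ..., n_t). -/
set_option maxHeartbeats 1000000
set_option synthInstance.maxHeartbeats 400000

open Submodule

section AssBasics

variable {R : Type*} [CommRing R] {M : Type*} [AddCommGroup M] [Module R M]

theorem KS.ass_mem_iff [IsNoetherianRing R] (p : Ideal R) :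
    p ∈ associatedPrimes R M ↔ p.IsPrime ∧ ∃ x : M, p = (Submodule.span R {x}).annihilator := by
  rw [AssociatedPrimes.mem_iff, isAssociatedPrime_iff]
  simp only [bot_colon']

theorem KS.ass_subset_union (N : Submodule R M) :
    associatedPrimes R M ⊆ associatedPrimes R N ∪ associatedPrimes R (M ⧸ N) := by
  exact associatedPrimes.subset_union_of_exact (f := N.subtype) (g := N.mkQ) N.injective_subtype
    (LinearMap.exact_subtype_mkQ N)

end AssBasics

section AssAlgebra

variable {A : Type*} [CommRing A] {B : Type*} [CommRing B] [Algebra A B]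
variable {X : Type*} [AddCommGroup X] [Module A X] [Module B X] [IsScalarTower A B X]

/-- associated primes (over A) of a cyclic B-module with prime annihilator -/
theorem KS.ass_restrict_cyclic [IsNoetherianRing A] (x : X) (P : Ideal B) [P.IsPrime]
    (hann : P = Submodule.annihilator (Submodule.span B {x}))
    {p : Ideal A} (hp : p ∈ associatedPrimes A ↥((Submodule.span B {x}).restrictScalars A)) :
    p = P.comap (algebraMap A B) := by
  obtain ⟨hp', y, hy⟩ := (KS.ass_mem_iff p).mp hp
  have hyx : (y : X) ∈ Submodule.span B {x} := y.2
  obtain ⟨b, hb⟩ := Submodule.mem_span_singleton.mp hyx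
  have hy0 : (y : X) ≠ 0 := by
    intro h0
    apply hp'.ne_top
    rw [hy, Submodule.annihilator_eq_top_iff, Submodule.span_singleton_eq_bot]
    exact Subtype.ext h0
  have hbP : b ∉ P := by
    intro hbP
    apply hy0
    rw [← hb]
    rw [hann] at hbP
    rwa [Submodule.mem_annihilator_span_singleton] at hbP
  ext a
  rw [hy, Submodule.mem_annihilator_span_singleton, Ideal.mem_comap]
  have hcoe : ∀ z : (Submodule.span B {x}).restrictScalars A, a • z = 0 ↔ a • (z : X) = 0 := by
    intro z
    constructor
    · intro h; exact congrArg Subtype.val h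
    · intro h; exact Subtype.ext h
  rw [hcoe]
  have : a • (y : X) = (algebraMap A B a * b) • x := by
    rw [← hb, mul_smul, algebraMap_smul]
  rw [this]
  constructor
  · intro h
    have : algebraMap A B a * b ∈ P := by
      rw [hann, Submodule.mem_annihilator_span_singleton]; exact h
    exact (Ideal.IsPrime.mem_or_mem ‹P.IsPrime› this).resolve_right hbP
  · intro h
    have : algebraMap A B a * b ∈ P := P.mul_mem_right b h
    rw [hann, Submodule.mem_annihilator_span_singleton] at this
    exact this

end AssAlgebra
open Submodule

section AssFinite

variable {A : Type*} [CommRing A] {B : Type*} [CommRing B] [Algebra A B]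
variable {X : Type*} [AddCommGroup X] [Module A X] [Module B X] [IsScalarTower A B X]


theorem KS.ass_finite_of_algebra [IsNoetherianRing A] [IsNoetherianRing B] [Module.Finite B X] :
    (associatedPrimes A X).Finite := by
  haveI : IsNoetherian B X := isNoetherian_of_isNoetherianRing_of_finite B X
  suffices h : ∀ N : Submodule B X, (associatedPrimes A (X ⧸ N)).Finite by
    have h0 := h ⊥
    have e : (X ⧸ (⊥ : Submodule B X)) ≃ₗ[A] X :=
      (Submodule.quotEquivOfEqBot (⊥ : Submodule B X) rfl).restrictScalars A
    rwa [LinearEquiv.AssociatedPrimes.eq e] at h0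
  intro N
  induction N using IsNoetherian.induction with
  | _ N IH =>
    by_cases hs : Subsingleton (X ⧸ N)
    · rw [associatedPrimes.eq_empty_of_subsingleton]
      exact Set.finite_empty
    · haveI : Nontrivial (X ⧸ N) := not_subsingleton_iff_nontrivial.mp hs
      obtain ⟨P, hP⟩ := associatedPrimes.nonempty B (X ⧸ N)
      obtain ⟨hPp, xq, hxq⟩ := (KS.ass_mem_iff P).mp hP
      haveI := hPp
      have hx0 : xq ≠ 0 := by
        intro h0
        apply hPp.ne_top
        rw [hxq, Submodule.annihilator_eq_top_iff, Submodule.span_singleton_eq_bot]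
        exact h0
      set S : Submodule B (X ⧸ N) := Submodule.span B {xq} with hS
      set N' : Submodule B X := Submodule.comap N.mkQ S with hN'
      have hmapN' : Submodule.map N.mkQ N' = S :=
        Submodule.map_comap_eq_of_surjective (Submodule.mkQ_surjective N) S
      have hNN' : N < N' := by
        rw [lt_iff_le_and_ne]
        constructor
        · intro z hz
          simp only [hN', Submodule.mem_comap]
          have : N.mkQ z = 0 := by simpa using (Submodule.Quotient.mk_eq_zero N).mpr hz
          rw [this]; exact S.zero_mem
        · intro hEq
          apply hx0
          have : S = ⊥ := by
            rw [← hmapN', ← hEq]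
            ext y
            simp only [Submodule.mem_map, Submodule.mem_bot]
            constructor
            · rintro ⟨z, hz, rfl⟩
              rwa [Submodule.mkQ_apply, Submodule.Quotient.mk_eq_zero]
            · rintro rfl
              exact ⟨0, N.zero_mem, map_zero _⟩
          have hmem := Submodule.mem_span_singleton_self (R := B) xq
          rw [← hS, this] at hmem
          simpa using hmem
      have hsub := KS.ass_subset_union (R := A) (M := X ⧸ N) (S.restrictScalars A)
      have hfin1 : (associatedPrimes A ↥(S.restrictScalars A)).Finite := by
        apply Set.Finite.subset (Set.finite_singleton (P.comap (algebraMap A B)))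
        intro p hp
        exact KS.ass_restrict_cyclic xq P hxq hp
      have hfin2 : (associatedPrimes A ((X ⧸ N) ⧸ (S.restrictScalars A))).Finite := by
        have e1 : ((X ⧸ N) ⧸ (S.restrictScalars A)) ≃ₗ[A] ((X ⧸ N) ⧸ S) :=
          Submodule.Quotient.restrictScalarsEquiv A S
        have e2 : ((X ⧸ N) ⧸ S) ≃ₗ[A] (X ⧸ N') := by
          have := Submodule.quotientQuotientEquivQuotient N N' hNN'.le
          rw [hmapN'] at this
          exact this.restrictScalars A
        rw [LinearEquiv.AssociatedPrimes.eq e1, LinearEquiv.AssociatedPrimes.eq e2]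
        exact IH N' hNN'
      exact Set.Finite.subset (hfin1.union hfin2) hsub

end AssFinite
open Submodule

section Torsion
variable {R : Type*} [CommRing R] [IsNoetherianRing R] {M : Type*} [AddCommGroup M] [Module R M]
  [Module.Finite R M]

theorem KS.ass_iff_torsion (p : Ideal R) (hp : p.IsPrime) :
    p ∈ associatedPrimes R M ↔ ∀ a ∉ p, ∃ x : M, (∀ c ∈ p, c • x = 0) ∧ a • x ≠ 0 := by
  constructor
  · intro hmem a ha
    obtain ⟨_, x, hx⟩ := (KS.ass_mem_iff p).mp hmem
    refine ⟨x, fun c hc => ?_, fun h0 => ha ?_⟩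
    · rw [hx] at hc; rwa [Submodule.mem_annihilator_span_singleton] at hc
    · rw [hx, Submodule.mem_annihilator_span_singleton]; exact h0
  · intro hcrit
    classical
    let G : Submodule R M :=
    { carrier := {x | ∀ c ∈ p, c • x = 0}
      add_mem' := by intro x y hx hy c hc; rw [smul_add, hx c hc, hy c hc, add_zero]
      zero_mem' := by intro c hc; rw [smul_zero]
      smul_mem' := by intro r x hx c hc; rw [smul_comm, hx c hc, smul_zero] }
    haveI : IsNoetherian R M := isNoetherian_of_isNoetherianRing_of_finite R M
    obtain ⟨s, hs⟩ := (IsNoetherian.noetherian G)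
    have hGmem : ∀ x, x ∈ G ↔ ∀ c ∈ p, c • x = 0 := fun _ => Iff.rfl
    have key : ∃ y ∈ s, (Submodule.span R {y}).annihilator = p := by
      by_contra hnone
      push_neg at hnone
      have hy' : ∀ y ∈ (s : Set M), ∃ a, a ∈ (Submodule.span R {y}).annihilator ∧ a ∉ p := by
        intro y hy
        have hyG : y ∈ G := by rw [← hs]; exact Submodule.subset_span hy
        have hple : p ≤ (Submodule.span R {y}).annihilator := by
          intro c hc
          rw [Submodule.mem_annihilator_span_singleton]
          exact (hGmem y).mp hyG c hc
        obtain ⟨a, ha1, ha2⟩ := SetLike.exists_of_lt (hple.lt_of_ne (hnone y hy).symm)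
        exact ⟨a, ha1, ha2⟩
      choose! f hf1 hf2 using hy'
      set a := ∏ y ∈ s, f y with ha
      have haP : a ∉ p := by
        refine Finset.prod_induction f (· ∉ p)
          (fun u v hu hv h => ((hp.mem_or_mem h).elim hu hv)) ?_ hf2
        exact fun h => hp.ne_top ((Ideal.eq_top_iff_one p).mpr h)
      have hak : ∀ x ∈ G, a • x = 0 := by
        intro x hxG
        have hle : G ≤ LinearMap.ker (LinearMap.lsmul R M a) := by
          rw [← hs, Submodule.span_le]
          intro y hy
          have h1 : f y • y = 0 := by
            have := hf1 y hy
            rwa [Submodule.mem_annihilator_span_singleton] at this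
          have : a = (∏ z ∈ s.erase y, f z) * f y := by
            rw [ha, ← Finset.prod_erase_mul s f hy]
          simp only [SetLike.mem_coe, LinearMap.mem_ker, LinearMap.lsmul_apply]
          rw [this, mul_smul, h1, smul_zero]
        have := hle hxG
        simpa using this
      obtain ⟨x, hx1, hx2⟩ := hcrit a haP
      exact hx2 (hak x ((hGmem x).mpr hx1))
    obtain ⟨y, _, hy⟩ := key
    exact (KS.ass_mem_iff p).mpr ⟨hp, y, hy.symm⟩

end Torsion

section Transfer
variable {A : Type*} [CommRing A] {R : Type*} [CommRing R]
  {X : Type*} [AddCommGroup X] [Module A X] {Y : Type*} [AddCommGroup Y] [Module R Y]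

theorem KS.ass_semilinear_transfer [IsNoetherianRing A] [IsNoetherianRing R] (σ : A →+* R) (hσ : Function.Surjective σ)
    (f : X ≃+ Y) (hf : ∀ (a : A) (x : X), f (a • x) = σ a • f x) :
    associatedPrimes A X = Ideal.comap σ '' associatedPrimes R Y := by
  ext q
  constructor
  · intro hqm
    obtain ⟨hq, x, hx⟩ := (KS.ass_mem_iff q).mp hqm
    set Q : Ideal R := (Submodule.span R {f x}).annihilator with hQ
    have hmem : ∀ a : A, a ∈ Ideal.comap σ Q ↔ a • x = 0 := by
      intro a
      rw [Ideal.mem_comap, hQ, Submodule.mem_annihilator_span_singleton, ← hf]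
      exact map_eq_zero_iff f f.injective
    have hcom : Ideal.comap σ Q = q := by
      ext a
      rw [hmem a, hx, Submodule.mem_annihilator_span_singleton]
    have hker : RingHom.ker σ ≤ q := by
      intro a ha
      rw [← hcom, hmem a]
      have hs0 : σ a = 0 := by rwa [RingHom.mem_ker] at ha
      apply f.injective
      rw [hf, map_zero, hs0, zero_smul]
    haveI := hq
    have hQprime : Q.IsPrime := by
      have hmapeq : Ideal.map σ q = Q := by
        conv_lhs => rw [← hcom]
        exact Ideal.map_comap_of_surjective σ hσ Q
      rw [← hmapeq]
      exact Ideal.map_isPrime_of_surjective hσ hker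
    exact ⟨Q, (KS.ass_mem_iff Q).mpr ⟨hQprime, f x, rfl⟩, hcom⟩
  · rintro ⟨Q, hQm, rfl⟩
    obtain ⟨hQ, y, hy⟩ := (KS.ass_mem_iff Q).mp hQm
    haveI := hQ
    refine (KS.ass_mem_iff _).mpr ⟨Ideal.IsPrime.comap σ, f.symm y, ?_⟩
    ext a
    rw [Ideal.mem_comap, hy, Submodule.mem_annihilator_span_singleton,
      Submodule.mem_annihilator_span_singleton]
    have hkey : f (a • f.symm y) = σ a • y := by rw [hf, f.apply_symm_apply]
    rw [← hkey]
    exact map_eq_zero_iff f f.injective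
end Transfer

open Submodule MvPolynomial

namespace KS

variable {A : Type*} [CommRing A] {t : ℕ}

/-- the product ideal `∏ I_j ^ d_j` -/
noncomputable def Pid (I : Fin t → Ideal A) (d : Fin t →₀ ℕ) : Ideal A := ∏ j, I j ^ d j

lemma Pid_zero (I : Fin t → Ideal A) : Pid I 0 = ⊤ := by simp [Pid, Ideal.top_pow]

lemma Pid_add (I : Fin t → Ideal A) (a b : Fin t →₀ ℕ) :
    Pid I (a + b) = Pid I a * Pid I b := by
  simp only [Pid, Finsupp.add_apply, pow_add, Finset.prod_mul_distrib]

lemma Pid_single (I : Fin t → Ideal A) (i : Fin t) : Pid I (Finsupp.single i 1) = I i := by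
  rw [Pid, Finset.prod_eq_single i]
  · simp
  · intro j _ hj
    simp [Finsupp.single_apply, Ne.symm hj]
  · simp

lemma Pid_add_single (I : Fin t → Ideal A) (m : Fin t →₀ ℕ) (i : Fin t) :
    Pid I (m + Finsupp.single i 1) = I i * Pid I m := by
  rw [Pid_add, Pid_single, mul_comm]

/-- total degree of a multi-exponent -/
def deg (d : Fin t →₀ ℕ) : ℕ := ∑ j, d j

lemma apply_le_deg (d : Fin t →₀ ℕ) (j : Fin t) : d j ≤ deg d :=
  Finset.single_le_sum (f := fun j => d j) (fun _ _ => Nat.zero_le _) (Finset.mem_univ j)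

lemma deg_add (a b : Fin t →₀ ℕ) : deg (a + b) = deg a + deg b := by
  simp [deg, Finset.sum_add_distrib]

lemma deg_single (i : Fin t) : deg (Finsupp.single i 1) = 1 := by
  simp [deg, Finsupp.single_apply]

lemma eq_zero_of_deg_eq_zero {d : Fin t →₀ ℕ} (h : deg d = 0) : d = 0 := by
  ext j
  have := Finset.sum_eq_zero_iff.mp h j (Finset.mem_univ j)
  simpa using this

lemma sub_single_add {d : Fin t →₀ ℕ} {i : Fin t} (hi : d i ≠ 0) :
    d = (d - Finsupp.single i 1) + Finsupp.single i 1 := by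
  ext j
  simp only [Finsupp.add_apply, Finsupp.tsub_apply, Finsupp.single_apply]
  by_cases hji : i = j
  · subst hji; simp; omega
  · simp [hji]

section Rees

variable [IsNoetherianRing A] (I : Fin t → Ideal A) (s : Fin t → Finset A)

/-- the multi-Rees algebra -/
noncomputable def RR : Subalgebra A (MvPolynomial (Fin t) A) :=
  Algebra.adjoin A (⋃ i, (fun a => MvPolynomial.C a * MvPolynomial.X i) '' ↑(s i))

lemma isNoetherianRing_RR : IsNoetherianRing ↥(RR (t := t) (A := A) s) := by
  haveI : Algebra.FiniteType A ↥(RR (t := t) (A := A) s) := by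
    rw [← Subalgebra.fg_iff_finiteType]
    rw [Subalgebra.fg_def]
    refine ⟨_, ?_, rfl⟩
    exact Set.finite_iUnion fun i => (s i).finite_toSet.image _
  exact Algebra.FiniteType.isNoetherianRing A _

lemma CX_mem (hs : ∀ i, Ideal.span ↑(s i) = I i) {i : Fin t} {a : A} (ha : a ∈ I i) :
    MvPolynomial.C a * MvPolynomial.X i ∈ RR (t := t) (A := A) s := by
  rw [← hs i] at ha
  induction ha using Submodule.span_induction with
  | mem x hx =>
    exact Algebra.subset_adjoin (Set.mem_iUnion.mpr ⟨i, Set.mem_image_of_mem _ hx⟩)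
  | zero => rw [map_zero, zero_mul]; exact zero_mem _
  | add x y _ _ hx hy =>
    rw [map_add, add_mul]
    exact add_mem hx hy
  | smul r x _ hx =>
    rw [smul_eq_mul, map_mul, mul_assoc]
    exact mul_mem ((RR s).algebraMap_mem' r) hx

lemma monomial_mem (hs : ∀ i, Ideal.span ↑(s i) = I i) :
    ∀ (d : Fin t →₀ ℕ) (x : A), x ∈ Pid I d →
    MvPolynomial.monomial d x ∈ RR (t := t) (A := A) s := by
  have main : ∀ N : ℕ, ∀ d : Fin t →₀ ℕ, deg d ≤ N → ∀ x ∈ Pid I d,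
      MvPolynomial.monomial d x ∈ RR (t := t) (A := A) s := by
    intro N
    induction N with
    | zero =>
      intro d hd x _
      have : d = 0 := eq_zero_of_deg_eq_zero (Nat.le_zero.mp hd)
      subst this
      rw [show (MvPolynomial.monomial (0 : Fin t →₀ ℕ)) x = MvPolynomial.C x from rfl]
      exact (RR s).algebraMap_mem' x
    | succ N IH =>
      intro d hd x hx
      by_cases h0 : d = 0
      · subst h0
        rw [show (MvPolynomial.monomial (0 : Fin t →₀ ℕ)) x = MvPolynomial.C x from rfl]
        exact (RR s).algebraMap_mem' x
      · obtain ⟨i, hi⟩ : ∃ i, d i ≠ 0 := by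
          by_contra hc
          push_neg at hc
          exact h0 (Finsupp.ext hc)
        set d' := d - Finsupp.single i 1 with hd'
        have hdd : d = d' + Finsupp.single i 1 := sub_single_add hi
        have hdeg : deg d' ≤ N := by
          have := deg_add d' (Finsupp.single i 1)
          rw [← hdd, deg_single] at this
          omega
        have hx' : x ∈ I i * Pid I d' := by
          rw [hdd, Pid_add_single] at hx
          exact hx
        refine Submodule.mul_induction_on hx' ?_ ?_
        · intro a ha y hy
          have heq : (MvPolynomial.monomial d) (a * y) =
              (MvPolynomial.C a * MvPolynomial.X i) * (MvPolynomial.monomial d') y := by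
            rw [MvPolynomial.C_mul_X_eq_monomial, MvPolynomial.monomial_mul, hdd,
              add_comm d' (Finsupp.single i 1)]
          rw [heq]
          exact mul_mem (CX_mem I s hs ha) (IH d' hdeg y hy)
        · intro u v hu hv
          rw [map_add]
          exact add_mem hu hv
  exact fun d x hx => main (deg d) d le_rfl x hx

lemma coeff_mem_of_mem_RR (hs : ∀ i, Ideal.span ↑(s i) = I i) :
    ∀ f ∈ RR (t := t) (A := A) s, ∀ d,
    MvPolynomial.coeff d f ∈ Pid I d := by
  intro f hf
  induction hf using Algebra.adjoin_induction with
  | mem x hx =>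
    intro d
    obtain ⟨i, a, ha, rfl⟩ : ∃ i a, a ∈ (s i : Set A) ∧
        MvPolynomial.C a * MvPolynomial.X i = x := by
      obtain ⟨U, ⟨i, rfl⟩, hU⟩ := hx
      obtain ⟨a, ha, rfl⟩ := hU
      exact ⟨i, a, ha, rfl⟩
    rw [MvPolynomial.C_mul_X_eq_monomial, MvPolynomial.coeff_monomial]
    split_ifs with h
    · subst h
      rw [Pid_single]
      rw [← hs i]
      exact Submodule.subset_span ha
    · exact zero_mem _
  | algebraMap r =>
    intro d
    rw [show (algebraMap A (MvPolynomial (Fin t) A)) r = MvPolynomial.C r from rfl,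
      MvPolynomial.coeff_C]
    split_ifs with h
    · rw [← h, Pid_zero]; trivial
    · exact zero_mem _
  | add x y hx hy ihx ihy =>
    intro d
    rw [MvPolynomial.coeff_add]
    exact add_mem (ihx d) (ihy d)
  | mul x y hx hy ihx ihy =>
    intro d
    rw [MvPolynomial.coeff_mul]
    refine Submodule.sum_mem _ ?_
    rintro ⟨u, v⟩ huv
    have : u + v = d := Finset.HasAntidiagonal.mem_antidiagonal.mp huv
    rw [← this, Pid_add]
    exact Ideal.mul_mem_mul (ihx u) (ihy v)

variable (Hf : (Fin t →₀ ℕ) → Ideal A)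

/-- the element `x X^d` of the Rees algebra -/
noncomputable def mkMon (hs : ∀ i, Ideal.span ↑(s i) = I i) (hHle : ∀ d, Hf d ≤ Pid I d)
    (d : Fin t →₀ ℕ) (x : A) (hx : x ∈ Hf d) :
    ↥(RR (t := t) (A := A) s) :=
  ⟨MvPolynomial.monomial d x, monomial_mem I s hs d x (hHle d hx)⟩

/-- the ideal of the Rees algebra spanned by a filtration family -/
noncomputable def JH : Ideal ↥(RR (t := t) (A := A) s) :=
  Ideal.span {g | ∃ d x, ∃ _ : x ∈ Hf d,
    (g : MvPolynomial (Fin t) A) = MvPolynomial.monomial d x}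

lemma coeff_mem_of_mem_JH (hs : ∀ i, Ideal.span ↑(s i) = I i)
    (hHfilt : ∀ a b, Pid I a * Hf b ≤ Hf (a + b)) :
    ∀ g ∈ JH (t := t) (A := A) s Hf, ∀ d, MvPolynomial.coeff d (g : MvPolynomial (Fin t) A) ∈ Hf d := by
  intro g hg
  induction hg using Submodule.span_induction with
  | mem x hx =>
    obtain ⟨d', x', hx', hx⟩ := hx
    intro d
    rw [hx, MvPolynomial.coeff_monomial]
    split_ifs with h
    · subst h; exact hx'
    · exact zero_mem _
  | zero => intro d; simp
  | add x y hx hy ihx ihy =>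
    intro d
    have : ((x + y : ↥(RR s)) : MvPolynomial (Fin t) A) = (x : MvPolynomial (Fin t) A) + y := rfl
    rw [this, MvPolynomial.coeff_add]
    exact add_mem (ihx d) (ihy d)
  | smul r x hx ihx =>
    intro d
    have : ((r • x : ↥(RR s)) : MvPolynomial (Fin t) A) =
        (r : MvPolynomial (Fin t) A) * (x : MvPolynomial (Fin t) A) := rfl
    rw [this, MvPolynomial.coeff_mul]
    refine Submodule.sum_mem _ ?_
    rintro ⟨u, v⟩ huv
    have huvd : u + v = d := Finset.HasAntidiagonal.mem_antidiagonal.mp huv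
    have h1 : MvPolynomial.coeff u (r : MvPolynomial (Fin t) A) ∈ Pid I u :=
      coeff_mem_of_mem_RR I s hs _ r.2 u
    have h2 : MvPolynomial.coeff v (x : MvPolynomial (Fin t) A) ∈ Hf v := ihx v
    rw [← huvd]
    exact hHfilt u v (Ideal.mul_mem_mul h1 h2)

theorem exists_deg_bound (hs : ∀ i, Ideal.span ↑(s i) = I i) (hHle : ∀ d, Hf d ≤ Pid I d)
    (hHfilt : ∀ a b, Pid I a * Hf b ≤ Hf (a + b)) :
    ∃ D : ℕ, ∀ m : Fin t →₀ ℕ, (∀ j, D ≤ m j) → ∀ i,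
      Hf (m + Finsupp.single i 1) ≤ I i * Hf m := by
  classical
  haveI := isNoetherianRing_RR (t := t) (A := A) s
  obtain ⟨G, hG⟩ := IsNoetherian.noetherian (JH (t := t) (A := A) s Hf)
  refine ⟨G.sup (fun g => ((g : MvPolynomial (Fin t) A).support.sup (fun d => deg d))), ?_⟩
  set D := G.sup (fun g => ((g : MvPolynomial (Fin t) A).support.sup (fun d => deg d))) with hD
  intro m hm i x hx
  have hDbound : ∀ g ∈ G, ∀ d ∈ (g : MvPolynomial (Fin t) A).support, ∀ j, d j ≤ D := by
    intro g hg d hd j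
    refine le_trans (apply_le_deg d j) (le_trans (Finset.le_sup hd) ?_)
    exact Finset.le_sup
      (f := fun g : ↥(RR (t := t) (A := A) s) =>
        ((g : MvPolynomial (Fin t) A).support.sup (fun d => deg d))) hg
  have hmem : mkMon I s Hf hs hHle (m + Finsupp.single i 1) x hx ∈ JH (t := t) (A := A) s Hf :=
    Ideal.subset_span ⟨m + Finsupp.single i 1, x, hx, rfl⟩
  rw [← hG] at hmem
  obtain ⟨c, -, hc⟩ := mem_span_finset.mp hmem
  have hx2 : x = ∑ g ∈ G, MvPolynomial.coeff (m + Finsupp.single i 1)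
      ((c g : MvPolynomial (Fin t) A) * (g : MvPolynomial (Fin t) A)) := by
    have h1 := congrArg (fun z : ↥(RR (t := t) (A := A) s) =>
      MvPolynomial.coeff (m + Finsupp.single i 1) (z : MvPolynomial (Fin t) A)) hc
    have h2 : ((∑ g ∈ G, c g • g : ↥(RR s)) : MvPolynomial (Fin t) A) =
        ∑ g ∈ G, (c g : MvPolynomial (Fin t) A) * (g : MvPolynomial (Fin t) A) := by
      rw [AddSubmonoidClass.coe_finset_sum]
      exact Finset.sum_congr rfl fun g _ => rfl
    have h3 : MvPolynomial.coeff (m + Finsupp.single i 1)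
        ((mkMon I s Hf hs hHle (m + Finsupp.single i 1) x hx :
          MvPolynomial (Fin t) A)) = x := by
      simp [mkMon, MvPolynomial.coeff_monomial]
    rw [← h3, ← h1, h2, MvPolynomial.coeff_sum]
  rw [hx2]
  refine Submodule.sum_mem _ ?_
  intro g hg
  rw [MvPolynomial.coeff_mul]
  refine Submodule.sum_mem _ ?_
  rintro ⟨u, v⟩ huv
  have huvsum : u + v = m + Finsupp.single i 1 := Finset.HasAntidiagonal.mem_antidiagonal.mp huv
  by_cases hv : v ∈ (g : MvPolynomial (Fin t) A).support
  · have hvle : ∀ j, v j ≤ m j := fun j => le_trans (hDbound g hg v hv j) (hm j)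
    have hui : u i ≠ 0 := by
      have h3 : u i + v i = m i + 1 := by
        have := congrArg (fun w : Fin t →₀ ℕ => w i) huvsum
        simpa using this
      have := hvle i
      omega
    have huu : u = (u - Finsupp.single i 1) + Finsupp.single i 1 := sub_single_add hui
    set u' := u - Finsupp.single i 1 with hu'
    have huv' : u' + v = m := by
      have h4 : (u' + Finsupp.single i 1) + v = m + Finsupp.single i 1 := by
        rw [← huu]; exact huvsum
      have h5 : (u' + v) + Finsupp.single i 1 = m + Finsupp.single i 1 := by
        rw [← h4, add_right_comm]
      exact add_right_cancel h5
    have h1 : MvPolynomial.coeff u (c g : MvPolynomial (Fin t) A) ∈ Pid I u' * I i := by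
      have hmm := coeff_mem_of_mem_RR I s hs _ (c g).2 u
      have hP : Pid I u = Pid I u' * I i := by
        conv_lhs => rw [huu]
        rw [Pid_add, Pid_single]
      rwa [hP] at hmm
    have h2 : MvPolynomial.coeff v (g : MvPolynomial (Fin t) A) ∈ Hf v := by
      refine coeff_mem_of_mem_JH I s Hf hs hHfilt g ?_ v
      rw [← hG]
      exact Submodule.subset_span hg
    have h6 : MvPolynomial.coeff u (c g : MvPolynomial (Fin t) A) *
        MvPolynomial.coeff v (g : MvPolynomial (Fin t) A) ∈ (Pid I u' * I i) * Hf v :=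
      Ideal.mul_mem_mul h1 h2
    have h7 : (Pid I u' * I i) * Hf v ≤ I i * Hf m := by
      have : (Pid I u' * I i) * Hf v = I i * (Pid I u' * Hf v) := by
        rw [mul_comm (Pid I u') (I i), mul_assoc]
      rw [this]
      refine Ideal.mul_mono_right ?_
      rw [← huv']
      exact hHfilt u' v
    exact h7 h6
  · have : MvPolynomial.coeff v (g : MvPolynomial (Fin t) A) = 0 :=
      MvPolynomial.notMem_support_iff.mp hv
    rw [this, mul_zero]
    exact zero_mem _

end Rees
end KS

namespace KS
section QIpart
open Submodule


variable {A : Type*} [CommRing A]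

/-- subquotient of two ideals, as an `A`-module -/
abbrev QI (U V : Ideal A) := ↥U ⧸ Submodule.comap U.subtype V

lemma ass_QI_le {V U : Ideal A} (hVU : V ≤ U) (W : Ideal A) :
    associatedPrimes A (QI V W) ⊆ associatedPrimes A (QI U W) := by
  have hker : Submodule.comap V.subtype W =
      LinearMap.ker ((Submodule.comap U.subtype W).mkQ ∘ₗ Submodule.inclusion hVU) := by
    ext v
    simp only [Submodule.mem_comap, LinearMap.mem_ker, LinearMap.comp_apply,
      Submodule.mkQ_apply, Submodule.Quotient.mk_eq_zero]
    rfl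
  set f := ((Submodule.comap U.subtype W).mkQ ∘ₗ Submodule.inclusion hVU)
  have hinj : Function.Injective ⇑((Submodule.comap V.subtype W).liftQ f hker.le) := by
    rw [← LinearMap.ker_eq_bot]
    exact Submodule.ker_liftQ_eq_bot _ _ _ hker.ge
  exact associatedPrimes.subset_of_injective hinj

lemma ass_QI_ses {W V U : Ideal A} (hWV : W ≤ V) (hVU : V ≤ U) :
    associatedPrimes A (QI U W) ⊆ associatedPrimes A (QI V W) ∪ associatedPrimes A (QI U V) := by
  set pW := Submodule.comap U.subtype W
  set pV := Submodule.comap U.subtype V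
  have hle : pW ≤ pV := fun x hx => hWV hx
  set N : Submodule A (QI U W) := pV.map pW.mkQ
  intro p hp
  rcases ass_subset_union N hp with h | h
  · left
    -- N ≃ QI V W
    set β : ↥V →ₗ[A] QI U W := pW.mkQ ∘ₗ Submodule.inclusion hVU
    have hrange : LinearMap.range β = N := by
      rw [LinearMap.range_comp, Submodule.range_inclusion]
    have hker : LinearMap.ker β = Submodule.comap V.subtype W := by
      ext v
      simp only [LinearMap.mem_ker, LinearMap.comp_apply, Submodule.mkQ_apply,
        Submodule.Quotient.mk_eq_zero, Submodule.mem_comap, β]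
      rfl
    have e : QI V W ≃ₗ[A] N :=
      (Submodule.quotEquivOfEq _ _ hker.symm).trans
        ((LinearMap.quotKerEquivRange β).trans (LinearEquiv.ofEq _ _ hrange))
    rwa [LinearEquiv.AssociatedPrimes.eq e]
  · right
    have e : (QI U W ⧸ N) ≃ₗ[A] QI U V := Submodule.quotientQuotientEquivQuotient pW pV hle
    rwa [← LinearEquiv.AssociatedPrimes.eq e]

variable [IsNoetherianRing A]

lemma ass_QI_iff (U W : Ideal A) (p : Ideal A) (hp : p.IsPrime) :
    p ∈ associatedPrimes A (QI U W) ↔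
      ∀ a ∉ p, ∃ v ∈ U, (∀ c ∈ p, c * v ∈ W) ∧ a * v ∉ W := by
  haveI : Module.Finite A ↥U := Module.Finite.iff_fg.mpr (IsNoetherian.noetherian U)
  rw [ass_iff_torsion p hp]
  constructor
  · intro h a ha
    obtain ⟨x, hx1, hx2⟩ := h a ha
    obtain ⟨v, rfl⟩ := Submodule.Quotient.mk_surjective _ x
    refine ⟨v.1, v.2, fun c hc => ?_, fun hc => hx2 ?_⟩
    · have := hx1 c hc
      rw [← Submodule.Quotient.mk_smul, Submodule.Quotient.mk_eq_zero] at this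
      simpa using this
    · rw [← Submodule.Quotient.mk_smul, Submodule.Quotient.mk_eq_zero]
      simpa using hc
  · intro h a ha
    obtain ⟨v, hvU, hv1, hv2⟩ := h a ha
    refine ⟨Submodule.Quotient.mk ⟨v, hvU⟩, fun c hc => ?_, fun hc => hv2 ?_⟩
    · rw [← Submodule.Quotient.mk_smul, Submodule.Quotient.mk_eq_zero]
      simpa using hv1 c hc
    · rw [← Submodule.Quotient.mk_smul, Submodule.Quotient.mk_eq_zero] at hc
      simpa using hc


end QIpart
end KS
namespace KS
section Core

variable {A : Type*} [CommRing A] [IsNoetherianRing A] {t : ℕ}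
variable (I : Fin t → Ideal A) (K : Ideal A)

/-- the filtration `𝕀(d)·K` -/
noncomputable def Ff (d : Fin t →₀ ℕ) : Ideal A := Pid I d * K

lemma Ff_le_Pid (d : Fin t →₀ ℕ) : Ff I K d ≤ Pid I d := Ideal.mul_le_left

lemma Ff_le_K (d : Fin t →₀ ℕ) : Ff I K d ≤ K := Ideal.mul_le_right

lemma Ff_filt (a b : Fin t →₀ ℕ) : Pid I a * Ff I K b ≤ Ff I K (a + b) := by
  rw [Ff, Ff, ← mul_assoc, ← Pid_add]

lemma Ff_single (n : Fin t →₀ ℕ) (i : Fin t) :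
    Ff I K (n + Finsupp.single i 1) = I i * Ff I K n := by
  rw [Ff, Ff, Pid_add_single, mul_assoc]

/-- associated primes of `K/𝕀(n)K` -/
noncomputable def AAs (n : Fin t →₀ ℕ) : Set (Ideal A) := associatedPrimes A (QI K (Ff I K n))

/-- associated primes of `𝕀(n)K / I_i 𝕀(n) K` -/
noncomputable def BBs (i : Fin t) (n : Fin t →₀ ℕ) : Set (Ideal A) :=
  associatedPrimes A (QI (Ff I K n) (I i * Ff I K n))

lemma AAs_congr {V V' : Ideal A} (U : Ideal A) (h : V = V') :
    associatedPrimes A (QI U V) = associatedPrimes A (QI U V') := by subst h; rfl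

lemma BB_le_AA (n : Fin t →₀ ℕ) (i : Fin t) :
    BBs I K i n ⊆ AAs I K (n + Finsupp.single i 1) := by
  rw [AAs, AAs_congr K (Ff_single I K n i)]
  exact ass_QI_le (Ff_le_K I K n) _

lemma AA_step (n : Fin t →₀ ℕ) (i : Fin t) :
    AAs I K (n + Finsupp.single i 1) ⊆ BBs I K i n ∪ AAs I K n := by
  have hWV : Ff I K (n + Finsupp.single i 1) ≤ Ff I K n := by
    rw [Ff_single]; exact Ideal.mul_le_right
  have h := ass_QI_ses hWV (Ff_le_K I K n)
  rw [AAs, BBs, ← AAs_congr (Ff I K n) (Ff_single I K n i), AAs]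
  exact h

lemma AA_finite (n : Fin t →₀ ℕ) : (AAs I K n).Finite := by
  haveI : Module.Finite A ↥K := Module.Finite.iff_fg.mpr (IsNoetherian.noetherian K)
  exact ass_finite_of_algebra (A := A) (B := A)

variable (s : Fin t → Finset A)

/-- the ideal `Ĩ_i · J(F)` of the Rees algebra -/
noncomputable def Wi (i : Fin t) : Ideal ↥(RR (t := t) (A := A) s) :=
  Ideal.map (algebraMap A ↥(RR (t := t) (A := A) s)) (I i) * JH s (Ff I K)

lemma coeff_mem_of_mem_mapI (hs : ∀ i, Ideal.span ↑(s i) = I i) (i : Fin t) :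
    ∀ f ∈ Ideal.map (algebraMap A ↥(RR (t := t) (A := A) s)) (I i),
      ∀ d, MvPolynomial.coeff d (f : MvPolynomial (Fin t) A) ∈ I i * Pid I d := by
  intro f hf
  induction hf using Submodule.span_induction with
  | mem x hx =>
    obtain ⟨a, ha, rfl⟩ := hx
    intro d
    have hcoe : ((algebraMap A ↥(RR (t := t) (A := A) s)) a : MvPolynomial (Fin t) A) =
        MvPolynomial.C a := rfl
    rw [hcoe, MvPolynomial.coeff_C]
    split_ifs with h
    · rw [← h, Pid_zero, Ideal.mul_top]; exact ha
    · exact zero_mem _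
  | zero => intro d; simp
  | add x y hx hy ihx ihy =>
    intro d
    have : ((x + y : ↥(RR s)) : MvPolynomial (Fin t) A) =
        (x : MvPolynomial (Fin t) A) + y := rfl
    rw [this, MvPolynomial.coeff_add]
    exact add_mem (ihx d) (ihy d)
  | smul r x hx ihx =>
    intro d
    have : ((r • x : ↥(RR s)) : MvPolynomial (Fin t) A) =
        (r : MvPolynomial (Fin t) A) * (x : MvPolynomial (Fin t) A) := rfl
    rw [this, MvPolynomial.coeff_mul]
    refine Submodule.sum_mem _ ?_
    rintro ⟨u, v⟩ huv
    have huvd : u + v = d := Finset.HasAntidiagonal.mem_antidiagonal.mp huv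
    have h1 : MvPolynomial.coeff u (r : MvPolynomial (Fin t) A) ∈ Pid I u :=
      coeff_mem_of_mem_RR I s hs _ r.2 u
    have h2 := ihx v
    have : Pid I u * (I i * Pid I v) = I i * Pid I (u + v) := by
      rw [Pid_add, mul_left_comm]
    rw [← huvd, ← this]
    exact Ideal.mul_mem_mul h1 h2

lemma coeff_mem_of_mem_Wi (hs : ∀ i, Ideal.span ↑(s i) = I i) (i : Fin t) :
    ∀ f ∈ Wi I K s i, ∀ d, MvPolynomial.coeff d (f : MvPolynomial (Fin t) A) ∈ I i * Ff I K d := by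
  intro f hf
  refine Submodule.mul_induction_on hf ?_ ?_
  · intro w hw g hg d
    have : ((w * g : ↥(RR s)) : MvPolynomial (Fin t) A) =
        (w : MvPolynomial (Fin t) A) * (g : MvPolynomial (Fin t) A) := rfl
    rw [this, MvPolynomial.coeff_mul]
    refine Submodule.sum_mem _ ?_
    rintro ⟨u, v⟩ huv
    have huvd : u + v = d := Finset.HasAntidiagonal.mem_antidiagonal.mp huv
    have h1 := coeff_mem_of_mem_mapI I s hs i w hw u
    have h2 := coeff_mem_of_mem_JH I s (Ff I K) hs (Ff_filt I K) g hg v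
    have h3 : (I i * Pid I u) * Ff I K v ≤ I i * Ff I K (u + v) := by
      rw [mul_assoc]
      exact Ideal.mul_mono_right (Ff_filt I K u v)
    rw [← huvd]
    exact h3 (Ideal.mul_mem_mul h1 h2)
  · intro x y hx hy d
    have : ((x + y : ↥(RR s)) : MvPolynomial (Fin t) A) =
        (x : MvPolynomial (Fin t) A) + y := rfl
    rw [this, MvPolynomial.coeff_add]
    exact add_mem (hx d) (hy d)

lemma BB_subset_UU (hs : ∀ i, Ideal.span ↑(s i) = I i) (i : Fin t) (n : Fin t →₀ ℕ) :
    BBs I K i n ⊆ associatedPrimes A (↥(RR (t := t) (A := A) s) ⧸ Wi I K s i) := by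
  classical
  set RRs := RR (t := t) (A := A) s
  set Q := (↥RRs ⧸ Wi I K s i)
  have hsmul : ∀ (a : A) (z : ↥RRs),
      Ideal.Quotient.mk (Wi I K s i) (algebraMap A ↥RRs a * z) =
        a • Ideal.Quotient.mk (Wi I K s i) z := by
    intro a z
    rw [map_mul, ← Ideal.Quotient.algebraMap_eq, ← IsScalarTower.algebraMap_apply,
      ← Algebra.smul_def]
  set φ : ↥(Ff I K n) →ₗ[A] Q :=
  { toFun := fun v => Ideal.Quotient.mk (Wi I K s i)
      (mkMon I s (Ff I K) hs (Ff_le_Pid I K) n v.1 v.2)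
    map_add' := by
      intro v w
      have e : mkMon I s (Ff I K) hs (Ff_le_Pid I K) n ((v + w : ↥(Ff I K n)) : A) (v + w).2 =
          mkMon I s (Ff I K) hs (Ff_le_Pid I K) n v.1 v.2 +
            mkMon I s (Ff I K) hs (Ff_le_Pid I K) n w.1 w.2 := by
        apply Subtype.ext
        show (MvPolynomial.monomial n) ((v + w : ↥(Ff I K n)) : A) = _
        have hvw : ((v + w : ↥(Ff I K n)) : A) = v.1 + w.1 := rfl
        rw [hvw, map_add]
        rfl
      show Ideal.Quotient.mk (Wi I K s i) _ = _
      rw [e, map_add]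
    map_smul' := by
      intro a v
      have e1 : mkMon I s (Ff I K) hs (Ff_le_Pid I K) n ((a • v : ↥(Ff I K n)) : A)
          (a • v).2 = algebraMap A ↥RRs a *
            mkMon I s (Ff I K) hs (Ff_le_Pid I K) n v.1 v.2 := by
        apply Subtype.ext
        show (MvPolynomial.monomial n) ((a • v : ↥(Ff I K n)) : A) = _
        have : ((a • v : ↥(Ff I K n)) : A) = a * v.1 := rfl
        rw [this]
        exact (MvPolynomial.C_mul_monomial).symm
      simp only [e1, RingHom.id_apply]
      exact hsmul a _ }
  have hker : LinearMap.ker φ = Submodule.comap (Ff I K n).subtype (I i * Ff I K n) := by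
    ext v
    simp only [LinearMap.mem_ker, Submodule.mem_comap, Submodule.coe_subtype]
    constructor
    · intro h
      have hmem : mkMon I s (Ff I K) hs (Ff_le_Pid I K) n v.1 v.2 ∈ Wi I K s i :=
        Ideal.Quotient.eq_zero_iff_mem.mp h
      have := coeff_mem_of_mem_Wi I K s hs i _ hmem n
      simpa [mkMon, MvPolynomial.coeff_monomial] using this
    · intro h
      show Ideal.Quotient.mk (Wi I K s i) _ = 0
      rw [Ideal.Quotient.eq_zero_iff_mem]
      have main : ∀ (w : A) (hw : w ∈ I i * Ff I K n) (hwF : w ∈ Ff I K n),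
          mkMon I s (Ff I K) hs (Ff_le_Pid I K) n w hwF ∈ Wi I K s i := by
        intro w hw
        induction hw using Submodule.mul_induction_on' with
        | mem_mul_mem a ha w hwF' =>
          intro hwF
          have e1 : mkMon I s (Ff I K) hs (Ff_le_Pid I K) n (a * w) hwF =
              algebraMap A ↥RRs a * mkMon I s (Ff I K) hs (Ff_le_Pid I K) n w hwF' := by
            apply Subtype.ext
            exact (MvPolynomial.C_mul_monomial).symm
          rw [e1]
          exact Ideal.mul_mem_mul (Ideal.mem_map_of_mem _ ha)
            (Ideal.subset_span ⟨n, w, hwF', rfl⟩)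
        | add x hx y hy ihx ihy =>
          intro hwF
          have hxF : x ∈ Ff I K n := Ideal.mul_le_right hx
          have hyF : y ∈ Ff I K n := Ideal.mul_le_right hy
          have e1 : mkMon I s (Ff I K) hs (Ff_le_Pid I K) n (x + y) hwF =
              mkMon I s (Ff I K) hs (Ff_le_Pid I K) n x hxF +
                mkMon I s (Ff I K) hs (Ff_le_Pid I K) n y hyF := by
            apply Subtype.ext
            simp [mkMon]
          rw [e1]
          exact add_mem (ihx hxF) (ihy hyF)
      exact main v.1 h v.2
  have hinj : Function.Injective
      ⇑((Submodule.comap (Ff I K n).subtype (I i * Ff I K n)).liftQ φ hker.ge) := by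
    rw [← LinearMap.ker_eq_bot]
    exact Submodule.ker_liftQ_eq_bot _ _ _ hker.le
  exact associatedPrimes.subset_of_injective hinj

lemma UU_finite (hs : ∀ i, Ideal.span ↑(s i) = I i) (i : Fin t) :
    (associatedPrimes A (↥(RR (t := t) (A := A) s) ⧸ Wi I K s i)).Finite := by
  haveI : IsNoetherianRing ↥(RR (t := t) (A := A) s) := isNoetherianRing_RR s
  exact ass_finite_of_algebra (A := A) (B := ↥(RR (t := t) (A := A) s))

end Core
end KS
namespace KS
section Core2

variable {A : Type*} [CommRing A] [IsNoetherianRing A] {t : ℕ}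
variable (I : Fin t → Ideal A) (K : Ideal A)

lemma eq_of_le_of_deg_le {z n : Fin t →₀ ℕ} (h : z ≤ n) (hd : deg n ≤ deg z) : z = n := by
  by_contra hne
  have hex : ∃ j, z j < n j := by
    by_contra hc
    push_neg at hc
    exact hne (Finsupp.ext fun j => le_antisymm (Finsupp.le_def.mp h j) (hc j))
  obtain ⟨j, hj⟩ := hex
  have : deg z < deg n :=
    Finset.sum_lt_sum (fun i _ => Finsupp.le_def.mp h i) ⟨j, Finset.mem_univ j, hj⟩
  omega

/-- the "torsion test" family -/
noncomputable def Htil (i : Fin t) (p : Ideal A) (d : Fin t →₀ ℕ) : Ideal A :=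
  Ff I K d ⊓ (I i * Ff I K d).colon p

lemma Htil_le (i : Fin t) (p : Ideal A) (d : Fin t →₀ ℕ) :
    Htil I K i p d ≤ Pid I d := le_trans inf_le_left (Ff_le_Pid I K d)

lemma Htil_filt (i : Fin t) (p : Ideal A) (a b : Fin t →₀ ℕ) :
    Pid I a * Htil I K i p b ≤ Htil I K i p (a + b) := by
  intro x hx
  refine Submodule.mul_induction_on hx ?_ (fun u v hu hv => add_mem hu hv)
  intro y hy v hv
  obtain ⟨hv1, hv2⟩ := hv
  constructor
  · exact Ff_filt I K a b (Ideal.mul_mem_mul hy hv1)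
  · refine SetLike.mem_coe.mpr (Submodule.mem_colon.mpr fun c hc => ?_)
    have h1 : v * c ∈ I i * Ff I K b := by
      have := Submodule.mem_colon.mp hv2 c hc
      simpa [smul_eq_mul] using this
    rw [smul_eq_mul, mul_assoc]
    have h3 : Pid I a * (I i * Ff I K b) ≤ I i * Ff I K (a + b) := by
      rw [mul_left_comm]
      exact Ideal.mul_mono_right (Ff_filt I K a b)
    exact h3 (Ideal.mul_mem_mul hy h1)

/-- `p` fails to be associated to `𝕀(n)K/I_i𝕀(n)K` -/
def Kill (i : Fin t) (p : Ideal A) (n : Fin t →₀ ℕ) : Prop :=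
  ∃ a, a ∉ p ∧ ∀ v ∈ Htil I K i p n, a * v ∈ I i * Ff I K n

lemma BB_iff_not_kill (i : Fin t) (p : Ideal A) (hp : p.IsPrime) (n : Fin t →₀ ℕ) :
    p ∈ BBs I K i n ↔ ¬ Kill I K i p n := by
  rw [BBs, ass_QI_iff _ _ p hp]
  constructor
  · rintro h ⟨a, ha, hk⟩
    obtain ⟨v, hvF, hvc, hav⟩ := h a ha
    refine hav (hk v ⟨hvF, ?_⟩)
    refine SetLike.mem_coe.mpr (Submodule.mem_colon.mpr fun c hc => ?_)
    rw [smul_eq_mul, mul_comm v c]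
    exact hvc c hc
  · intro hnk a ha
    by_contra hno
    push_neg at hno
    refine hnk ⟨a, ha, fun v hv => ?_⟩
    refine hno v hv.1 fun c hc => ?_
    have := Submodule.mem_colon.mp hv.2 c hc
    rwa [smul_eq_mul, mul_comm v c] at this

variable (s : Fin t → Finset A)

lemma exists_kp (hs : ∀ i, Ideal.span ↑(s i) = I i) (i : Fin t) (p : Ideal A) :
    ∃ kp : ℕ, ∀ n m : Fin t →₀ ℕ, (∀ j, kp ≤ n j) → (∀ j, kp ≤ m j) →
      (p ∈ BBs I K i n ↔ p ∈ BBs I K i m) := by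
  by_cases hp : p.IsPrime
  swap
  · exact ⟨0, fun n m _ _ => iff_of_false (fun h => hp h.isPrime) (fun h => hp h.isPrime)⟩
  obtain ⟨D, hD⟩ :=
    exists_deg_bound I s (Htil I K i p) hs (Htil_le I K i p) (Htil_filt I K i p)
  have step : ∀ m : Fin t →₀ ℕ, (∀ j, D ≤ m j) → ∀ jj,
      Kill I K i p m → Kill I K i p (m + Finsupp.single jj 1) := by
    rintro m hm jj ⟨a, ha, hk⟩
    refine ⟨a, ha, fun v hv => ?_⟩
    have hv' : v ∈ I jj * Htil I K i p m := hD m hm jj hv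
    have rearr : I i * Ff I K (m + Finsupp.single jj 1) = I jj * (I i * Ff I K m) := by
      rw [Ff_single, mul_left_comm]
    rw [rearr]
    refine Submodule.mul_induction_on hv' ?_ ?_
    · intro y hy w hw
      rw [mul_left_comm a y w]
      exact Ideal.mul_mem_mul hy (hk w hw)
    · intro x y hx hy
      rw [mul_add]
      exact add_mem hx hy
  have up : ∀ N : ℕ, ∀ z n : Fin t →₀ ℕ, deg n ≤ deg z + N → (∀ j, D ≤ z j) → z ≤ n →
      Kill I K i p z → Kill I K i p n := by
    intro N
    induction N with
    | zero =>
      intro z n hdeg hDz hle hk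
      have : z = n := eq_of_le_of_deg_le hle (by omega)
      rwa [← this]
    | succ N IH =>
      intro z n hdeg hDz hle hk
      by_cases hzn : z = n
      · rwa [← hzn]
      · have hex : ∃ j, z j < n j := by
          by_contra hc
          push_neg at hc
          exact hzn (Finsupp.ext fun j => le_antisymm (Finsupp.le_def.mp hle j) (hc j))
        obtain ⟨j, hj⟩ := hex
        refine IH (z + Finsupp.single j 1) n ?_ ?_ ?_ (step z hDz j hk)
        · rw [deg_add, deg_single]
          omega
        · intro j'
          have h9 : ((z + Finsupp.single j 1 : Fin t →₀ ℕ)) j' = z j' + (Finsupp.single j 1 : Fin t →₀ ℕ) j' :=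
            Finsupp.add_apply z (Finsupp.single j 1) j'
          have := hDz j'
          omega
        · rw [Finsupp.le_def]
          intro j'
          have h9 : ((z + Finsupp.single j 1 : Fin t →₀ ℕ)) j' = z j' + (Finsupp.single j 1 : Fin t →₀ ℕ) j' :=
            Finsupp.add_apply z (Finsupp.single j 1) j'
          have h10 : (Finsupp.single j 1 : Fin t →₀ ℕ) j' = if j = j' then 1 else 0 :=
            Finsupp.single_apply
          have h11 := Finsupp.le_def.mp hle j'
          by_cases hjj : j = j'
          · subst hjj; rw [if_pos rfl] at h10; omega
          · rw [if_neg hjj] at h10; omega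
  by_cases hex : ∃ z : Fin t →₀ ℕ, (∀ j, D ≤ z j) ∧ Kill I K i p z
  · obtain ⟨z, hz1, hz2⟩ := hex
    refine ⟨max D (deg z), fun n m hn hm => ?_⟩
    have hkill : ∀ n' : Fin t →₀ ℕ, (∀ j, max D (deg z) ≤ n' j) → Kill I K i p n' := by
      intro n' hn'
      refine up (deg n') z n' (Nat.le_add_left _ _) hz1 ?_ hz2
      rw [Finsupp.le_def]
      intro j
      exact le_trans (le_trans (apply_le_deg z j) (le_max_right _ _)) (hn' j)
    exact iff_of_false (fun h => (BB_iff_not_kill I K i p hp n).mp h (hkill n hn))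
      (fun h => (BB_iff_not_kill I K i p hp m).mp h (hkill m hm))
  · refine ⟨D, fun n m hn hm => ?_⟩
    push_neg at hex
    exact iff_of_true ((BB_iff_not_kill I K i p hp n).mpr (hex n hn))
      ((BB_iff_not_kill I K i p hp m).mpr (hex m hm))

lemma BB_stable (hs : ∀ i, Ideal.span ↑(s i) = I i) :
    ∃ k₀ : ℕ, ∀ (i : Fin t) (n m : Fin t →₀ ℕ), (∀ j, k₀ ≤ n j) → (∀ j, k₀ ≤ m j) →
      BBs I K i n = BBs I K i m := by
  classical
  choose kp hkp using exists_kp I K s hs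
  set F2 : Fin t → ℕ := fun i : Fin t =>
    ((UU_finite I K s hs i).toFinset.sup (fun p => kp i p)) with hF2
  set k₀ : ℕ := Finset.univ.sup F2 with hk₀
  refine ⟨k₀, ?_⟩
  intro i n m hn hm
  have key : ∀ p, p ∈ BBs I K i n → p ∈ BBs I K i m := by
    intro p hp
    have hpU : p ∈ associatedPrimes A (↥(RR (t := t) (A := A) s) ⧸ Wi I K s i) :=
      BB_subset_UU I K s hs i n hp
    have hle : kp i p ≤ k₀ := by
      refine le_trans (Finset.le_sup (f := fun p => kp i p)
        ((UU_finite I K s hs i).mem_toFinset.mpr hpU)) ?_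
      exact Finset.le_sup (f := F2) (Finset.mem_univ i)
    exact (hkp i p n m (fun j => le_trans hle (hn j)) (fun j => le_trans hle (hm j))).mp hp
  have key' : ∀ p, p ∈ BBs I K i m → p ∈ BBs I K i n := by
    intro p hp
    have hpU : p ∈ associatedPrimes A (↥(RR (t := t) (A := A) s) ⧸ Wi I K s i) :=
      BB_subset_UU I K s hs i m hp
    have hle : kp i p ≤ k₀ := by
      refine le_trans (Finset.le_sup (f := fun p => kp i p)
        ((UU_finite I K s hs i).mem_toFinset.mpr hpU)) ?_
      exact Finset.le_sup (f := F2) (Finset.mem_univ i)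
    exact (hkp i p n m (fun j => le_trans hle (hn j)) (fun j => le_trans hle (hm j))).mpr hp
  exact Set.Subset.antisymm key key'

theorem core_stable : ∃ k : ℕ, ∀ n m : Fin t →₀ ℕ, (∀ j, k ≤ n j) → (∀ j, k ≤ m j) →
    AAs I K n = AAs I K m := by
  classical
  have hfg : ∀ i, ∃ S : Finset A, Ideal.span (↑S : Set A) = I i := fun i =>
    IsNoetherian.noetherian (I i)
  choose s hs using hfg
  obtain ⟨k₀, hk₀⟩ := BB_stable I K s hs
  set cK : Fin t →₀ ℕ := Finsupp.equivFunOnFinite.symm (fun _ => k₀) with hcKdef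
  have hcK : ∀ j, cK j = k₀ := fun j => congrFun (Finsupp.coe_equivFunOnFinite_symm _) j
  set Bu : Set (Ideal A) := ⋃ i, BBs I K i cK with hBu
  have hBB : ∀ i (n : Fin t →₀ ℕ), (∀ j, k₀ ≤ n j) → BBs I K i n = BBs I K i cK :=
    fun i n hn => hk₀ i n cK hn (fun j => le_of_eq (hcK j).symm)
  have hBU : ∀ n : Fin t →₀ ℕ, (∀ j, k₀ + 1 ≤ n j) → Bu ⊆ AAs I K n := by
    intro n hn p hp
    obtain ⟨Bi, ⟨i, rfl⟩, hpB⟩ := hp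
    have hni : n i ≠ 0 := by have := hn i; omega
    have hrep : n = (n - Finsupp.single i 1) + Finsupp.single i 1 := sub_single_add hni
    have hcoord : ∀ j, k₀ ≤ ((n - Finsupp.single i 1 : Fin t →₀ ℕ)) j := by
      intro j
      have h1 : ((n - Finsupp.single i 1 : Fin t →₀ ℕ)) j
          = n j - (Finsupp.single i 1 : Fin t →₀ ℕ) j :=
        Finsupp.tsub_apply n (Finsupp.single i 1) j
      have h2 : (Finsupp.single i 1 : Fin t →₀ ℕ) j = if i = j then 1 else 0 :=
        Finsupp.single_apply
      have := hn j
      split_ifs at h2 <;> omega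
    have h1 : p ∈ BBs I K i (n - Finsupp.single i 1) := by
      rw [hBB i _ hcoord]
      exact hpB
    have h2 := BB_le_AA I K (n - Finsupp.single i 1) i h1
    rwa [← hrep] at h2
  set g : (Fin t →₀ ℕ) → Set (Ideal A) := fun n => AAs I K n \ Bu with hg
  have hgstep : ∀ n : Fin t →₀ ℕ, (∀ j, k₀ ≤ n j) → ∀ i,
      g (n + Finsupp.single i 1) ⊆ g n := by
    intro n hn i p hp
    obtain ⟨hp1, hp2⟩ := hp
    rcases AA_step I K n i hp1 with h | h
    · rw [hBB i n hn] at h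
      exact absurd (Set.mem_iUnion.mpr ⟨i, h⟩) hp2
    · exact ⟨h, hp2⟩
  have hgdown : ∀ N : ℕ, ∀ z n : Fin t →₀ ℕ, deg n ≤ deg z + N → (∀ j, k₀ ≤ z j) →
      z ≤ n → g n ⊆ g z := by
    intro N
    induction N with
    | zero =>
      intro z n hdeg hDz hle
      have : z = n := eq_of_le_of_deg_le hle (by omega)
      rw [this]
    | succ N IH =>
      intro z n hdeg hDz hle
      by_cases hzn : z = n
      · rw [hzn]
      · have hex : ∃ j, z j < n j := by
          by_contra hc
          push_neg at hc
          exact hzn (Finsupp.ext fun j => le_antisymm (Finsupp.le_def.mp hle j) (hc j))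
        obtain ⟨j, hj⟩ := hex
        refine Set.Subset.trans (IH (z + Finsupp.single j 1) n ?_ ?_ ?_) (hgstep z hDz j)
        · rw [deg_add, deg_single]
          omega
        · intro j'
          have h9 : ((z + Finsupp.single j 1 : Fin t →₀ ℕ)) j' = z j' + (Finsupp.single j 1 : Fin t →₀ ℕ) j' :=
            Finsupp.add_apply z (Finsupp.single j 1) j'
          have := hDz j'
          omega
        · rw [Finsupp.le_def]
          intro j'
          have h9 : ((z + Finsupp.single j 1 : Fin t →₀ ℕ)) j' = z j' + (Finsupp.single j 1 : Fin t →₀ ℕ) j' :=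
            Finsupp.add_apply z (Finsupp.single j 1) j'
          have h10 : (Finsupp.single j 1 : Fin t →₀ ℕ) j' = if j = j' then 1 else 0 :=
            Finsupp.single_apply
          have h11 := Finsupp.le_def.mp hle j'
          by_cases hjj : j = j'
          · subst hjj; rw [if_pos rfl] at h10; omega
          · rw [if_neg hjj] at h10; omega
  set S : Set ℕ := {c | ∃ n : Fin t →₀ ℕ, (∀ j, k₀ + 1 ≤ n j) ∧ (g n).ncard = c} with hSdef
  have hS : S.Nonempty := by
    refine ⟨(g (Finsupp.equivFunOnFinite.symm (fun _ => k₀ + 1))).ncard,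
      Finsupp.equivFunOnFinite.symm (fun _ => k₀ + 1), fun j => ?_, rfl⟩
    rw [Finsupp.coe_equivFunOnFinite_symm]
  obtain ⟨N, hN1, hN2⟩ := Nat.sInf_mem hS
  refine ⟨max (k₀ + 1) (deg N), fun n m hn hm => ?_⟩
  have main : ∀ n' : Fin t →₀ ℕ, (∀ j, max (k₀ + 1) (deg N) ≤ n' j) →
      AAs I K n' = g N ∪ Bu := by
    intro n' hn'
    have hNle : N ≤ n' := by
      rw [Finsupp.le_def]
      intro j
      exact le_trans (le_trans (apply_le_deg N j) (le_max_right _ _)) (hn' j)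
    have h1 : g n' ⊆ g N := by
      refine hgdown (deg n') N n' (Nat.le_add_left _ _) (fun j => ?_) hNle
      have := hN1 j
      omega
    have h2 : (g N).ncard ≤ (g n').ncard := by
      have hmem : (g n').ncard ∈ S :=
        ⟨n', fun j => le_trans (le_max_left _ _) (hn' j), rfl⟩
      rw [hN2]
      exact Nat.sInf_le hmem
    have h3 : g n' = g N := Set.eq_of_subset_of_ncard_le h1 h2 ((AA_finite I K N).diff)
    have h4 : Bu ⊆ AAs I K n' := hBU n' (fun j => le_trans (le_max_left _ _) (hn' j))
    rw [← h3]
    exact (Set.diff_union_of_subset h4).symm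
  rw [main n hn, main m hm]

end Core2
end KS
namespace KS
section Glue

variable {R : Type*} [CommRing R] [IsNoetherianRing R]
variable {M : Type*} [AddCommGroup M] [Module R M] [Module Rᵐᵒᵖ M] [IsCentralScalar R M]
variable [Module.Finite R M]

open TrivSqZeroExt

/-- `fst` as a ring hom -/
def fstRH : TrivSqZeroExt R M →+* R where
  toFun := fun x => x.fst
  map_one' := rfl
  map_mul' := fun _ _ => rfl
  map_zero' := rfl
  map_add' := fun _ _ => rfl

lemma fstRH_apply (x : TrivSqZeroExt R M) : fstRH x = x.fst := rfl

lemma fstRH_surj : Function.Surjective (fstRH (R := R) (M := M)) :=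
  fun r => ⟨TrivSqZeroExt.inl r, fst_inl M r⟩

lemma noeth_TA : IsNoetherianRing (TrivSqZeroExt R M) := by
  haveI h1 : Module.Finite R (TrivSqZeroExt R M) :=
    inferInstanceAs (Module.Finite R (R × M))
  haveI h2 : IsNoetherian R (TrivSqZeroExt R M) :=
    isNoetherian_of_isNoetherianRing_of_finite R _
  exact isNoetherianRing_iff.mpr (isNoetherian_of_tower R h2)

/-- the ideal `0 ⋉ M` -/
def KAid : Ideal (TrivSqZeroExt R M) := RingHom.ker (fstRH (R := R) (M := M))

lemma mem_KAid {x : TrivSqZeroExt R M} : x ∈ KAid (R := R) (M := M) ↔ x.fst = 0 :=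
  ⟨fun h => h, fun h => h⟩

lemma fst_mem_map {J : Ideal R} :
    ∀ w ∈ Ideal.map (algebraMap R (TrivSqZeroExt R M)) J, TrivSqZeroExt.fst w ∈ J := by
  intro w hw
  induction hw using Submodule.span_induction with
  | mem x hx =>
    obtain ⟨a, ha, rfl⟩ := hx
    rwa [show TrivSqZeroExt.fst (algebraMap R (TrivSqZeroExt R M) a) = a from rfl]
  | zero => exact J.zero_mem
  | add x y _ _ ihx ihy => rw [fst_add]; exact J.add_mem ihx ihy
  | smul r x _ ihx =>
    rw [smul_eq_mul, fst_mul]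
    exact J.mul_mem_left _ ihx

lemma G2a {J : Ideal R} :
    ∀ x ∈ Ideal.map (algebraMap R (TrivSqZeroExt R M)) J * KAid (R := R) (M := M),
      x.fst = 0 ∧ x.snd ∈ J • (⊤ : Submodule R M) := by
  intro x hx
  refine Submodule.mul_induction_on hx ?_ ?_
  · intro w hw k hk
    have hk0 : k.fst = 0 := mem_KAid.mp hk
    constructor
    · rw [fst_mul, hk0, mul_zero]
    · rw [snd_mul, hk0]
      have h1 : w.fst • k.snd ∈ J • (⊤ : Submodule R M) :=
        Submodule.smul_mem_smul (fst_mem_map w hw) Submodule.mem_top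
      have h2 : (MulOpposite.op (0 : R)) • w.snd = 0 := by
        rw [MulOpposite.op_zero, zero_smul]
      rw [h2, add_zero]
      exact h1
  · intro x y hx hy
    rw [fst_add, snd_add]
    exact ⟨by rw [hx.1, hy.1, add_zero], Submodule.add_mem _ hx.2 hy.2⟩

lemma G2b {J : Ideal R} :
    ∀ m ∈ J • (⊤ : Submodule R M),
      TrivSqZeroExt.inr m ∈ Ideal.map (algebraMap R (TrivSqZeroExt R M)) J *
        KAid (R := R) (M := M) := by
  intro m hm
  refine Submodule.smul_induction_on hm ?_ ?_
  · intro r hr x _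
    have h1 : (TrivSqZeroExt.inr (r • x) : TrivSqZeroExt R M) =
        TrivSqZeroExt.inl r * TrivSqZeroExt.inr x := (inl_mul_inr r x).symm
    rw [h1]
    refine Ideal.mul_mem_mul ?_ ?_
    · have h2 : (TrivSqZeroExt.inl r : TrivSqZeroExt R M) =
          algebraMap R (TrivSqZeroExt R M) r := rfl
      rw [h2]
      exact Ideal.mem_map_of_mem _ hr
    · exact mem_KAid.mpr rfl
  · intro x y hx hy
    have : (TrivSqZeroExt.inr (x + y) : TrivSqZeroExt R M) =
        TrivSqZeroExt.inr x + TrivSqZeroExt.inr y := inr_add R x y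
    rw [this]
    exact Submodule.add_mem _ hx hy

end Glue
end KS
namespace KS
section Glue2

variable {R : Type*} [CommRing R] [IsNoetherianRing R]
variable {M : Type*} [AddCommGroup M] [Module R M] [Module Rᵐᵒᵖ M] [IsCentralScalar R M]
variable [Module.Finite R M] {t : ℕ}

open TrivSqZeroExt

theorem kingsbury_core (I : Fin t → Ideal R) :
    ∃ k : ℕ, ∀ n m : Fin t →₀ ℕ, (∀ j, k ≤ n j) → (∀ j, k ≤ m j) →
      associatedPrimes R (M ⧸ (Pid I n • (⊤ : Submodule R M))) =
        associatedPrimes R (M ⧸ (Pid I m • (⊤ : Submodule R M))) := by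
  haveI := noeth_TA (R := R) (M := M)
  set σ : TrivSqZeroExt R M →+* R := fstRH with hσdef
  set I' : Fin t → Ideal (TrivSqZeroExt R M) :=
    fun j => Ideal.map (algebraMap R (TrivSqZeroExt R M)) (I j) with hI'
  set K' : Ideal (TrivSqZeroExt R M) := KAid with hK'
  have hmapPid : ∀ d : Fin t →₀ ℕ,
      Pid I' d = Ideal.map (algebraMap R (TrivSqZeroExt R M)) (Pid I d) := by
    intro d
    let mh : Ideal R →* Ideal (TrivSqZeroExt R M) :=
      { toFun := Ideal.map (algebraMap R (TrivSqZeroExt R M))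
        map_one' := by rw [Ideal.one_eq_top, Ideal.one_eq_top, Ideal.map_top]
        map_mul' := fun p q => Ideal.map_mul _ p q }
    show ∏ j, (mh (I j)) ^ d j = mh (∏ j, I j ^ d j)
    rw [map_prod mh]
    exact Finset.prod_congr rfl fun j _ => (map_pow mh _ _).symm
  have hFf : ∀ (d : Fin t →₀ ℕ) (x : TrivSqZeroExt R M), x ∈ Ff I' K' d ↔
      x.fst = 0 ∧ x.snd ∈ Pid I d • (⊤ : Submodule R M) := by
    intro d x
    constructor
    · intro hx
      have hx' : x ∈ Ideal.map (algebraMap R (TrivSqZeroExt R M)) (Pid I d) * K' := by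
        rw [Ff, hmapPid] at hx
        exact hx
      exact G2a x hx'
    · rintro ⟨h1, h2⟩
      have hx : x = TrivSqZeroExt.inr x.snd := by
        refine TrivSqZeroExt.ext ?_ ?_
        · rw [h1, fst_inr]
        · rw [snd_inr]
      rw [hx, Ff, hmapPid]
      exact G2b x.snd h2
  obtain ⟨k, hk⟩ := core_stable I' K'
  refine ⟨k, fun n m hn hm => ?_⟩
  have hcore := hk n m hn hm
  simp only [AAs] at hcore
  have transfer : ∀ d : Fin t →₀ ℕ, associatedPrimes (TrivSqZeroExt R M) (QI K' (Ff I' K' d)) =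
      Ideal.comap σ '' associatedPrimes R (M ⧸ (Pid I d • (⊤ : Submodule R M))) := by
    intro d
    set W : Submodule R M := Pid I d • (⊤ : Submodule R M) with hW
    set γ : ↥K' →ₛₗ[σ] M ⧸ W :=
      { toFun := fun x => Submodule.Quotient.mk (x : TrivSqZeroExt R M).snd
        map_add' := fun x y => by
          show (Submodule.Quotient.mk (((x + y : ↥K') : TrivSqZeroExt R M)).snd : M ⧸ W) =
            Submodule.Quotient.mk ((x : TrivSqZeroExt R M)).snd +
              Submodule.Quotient.mk ((y : TrivSqZeroExt R M)).snd
          have h0 : ((x + y : ↥K') : TrivSqZeroExt R M) =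
              (x : TrivSqZeroExt R M) + (y : TrivSqZeroExt R M) := rfl
          rw [h0, snd_add, ← Submodule.Quotient.mk_add]
        map_smul' := fun a x => by
          show (Submodule.Quotient.mk (((a • x : ↥K') : TrivSqZeroExt R M)).snd : M ⧸ W) =
            σ a • Submodule.Quotient.mk ((x : TrivSqZeroExt R M)).snd
          have h0 : ((a • x : ↥K') : TrivSqZeroExt R M) = a * (x : TrivSqZeroExt R M) := by
            rw [Submodule.coe_smul, smul_eq_mul]
          have h1 : (x : TrivSqZeroExt R M).fst = 0 := mem_KAid.mp x.2
          rw [h0, snd_mul, h1, MulOpposite.op_zero, zero_smul, add_zero,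
            ← Submodule.Quotient.mk_smul]
          rfl } with hγ
    have hker : Submodule.comap K'.subtype (Ff I' K' d) = LinearMap.ker γ := by
      ext x
      have h1 : (x : TrivSqZeroExt R M).fst = 0 := mem_KAid.mp x.2
      simp only [Submodule.mem_comap, LinearMap.mem_ker]
      rw [hFf]
      constructor
      · rintro ⟨-, h2⟩
        show Submodule.Quotient.mk _ = 0
        rwa [Submodule.Quotient.mk_eq_zero]
      · intro h2
        refine ⟨h1, ?_⟩
        rwa [show γ x = Submodule.Quotient.mk (x : TrivSqZeroExt R M).snd from rfl,
          Submodule.Quotient.mk_eq_zero] at h2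
    set γ' := (Submodule.comap K'.subtype (Ff I' K' d)).liftQ γ hker.le with hγ'
    have hinj : Function.Injective ⇑γ' := by
      rw [← LinearMap.ker_eq_bot]
      exact Submodule.ker_liftQ_eq_bot _ _ _ hker.ge
    have hsurj : Function.Surjective ⇑γ' := by
      intro y
      obtain ⟨mrep, rfl⟩ := Submodule.Quotient.mk_surjective W y
      refine ⟨Submodule.Quotient.mk (⟨TrivSqZeroExt.inr mrep, mem_KAid.mpr (fst_inr ..)⟩ : ↥K'),
        ?_⟩
      rw [hγ', Submodule.liftQ_apply]
      show Submodule.Quotient.mk _ = _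
      rw [snd_inr]
    set e : QI K' (Ff I' K' d) ≃+ (M ⧸ W) := AddEquiv.ofBijective γ'.toAddMonoidHom
      ⟨hinj, hsurj⟩ with he
    have hcompat : ∀ (a : TrivSqZeroExt R M) (x : QI K' (Ff I' K' d)),
        e (a • x) = σ a • e x := by
      intro a x
      show γ' (a • x) = σ a • γ' x
      exact LinearMap.map_smulₛₗ γ' a x
    exact ass_semilinear_transfer σ fstRH_surj e hcompat
  rw [transfer n, transfer m] at hcore
  exact Set.image_injective.mpr (Ideal.comap_injective_of_surjective σ fstRH_surj) hcore

end Glue2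
end KS

/-- **Kingsbury–Sharp theorem.** For ideals `I 1, …, I t` of a commutative Noetherian
ring `R` and a finitely generated `R`-module `M`, the set of associated primes of
`M / (I₁^{n₁} ⋯ I_t^{n_t}) M` is independent of `(n₁, …, n_t)` for all `n_j` large. -/
theorem kingsbury_sharp_ass_stable (R : Type*) [CommRing R] [IsNoetherianRing R]
    (t : ℕ) (I : Fin t → Ideal R)
    (M : Type*) [AddCommGroup M] [Module R M] [Module.Finite R M] :
    ∃ k : ℕ, ∀ n m : Fin t → ℕ, (∀ j, k ≤ n j) → (∀ j, k ≤ m j) →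
      associatedPrimes R (M ⧸ ((∏ j, I j ^ n j) • (⊤ : Submodule R M))) =
        associatedPrimes R (M ⧸ ((∏ j, I j ^ m j) • (⊤ : Submodule R M))) := by
  letI : Module Rᵐᵒᵖ M := Module.compHom M ((RingHom.id R).fromOpposite mul_comm)
  haveI : IsCentralScalar R M := ⟨fun r m => rfl⟩
  obtain ⟨k, hk⟩ := KS.kingsbury_core (R := R) (M := M) I
  refine ⟨k, fun n m hn hm => ?_⟩
  have h1 : (∏ j, I j ^ n j) = KS.Pid I (Finsupp.equivFunOnFinite.symm n) :=
    Finset.prod_congr rfl fun j _ => by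
      rw [Finsupp.coe_equivFunOnFinite_symm]
  have h2 : (∏ j, I j ^ m j) = KS.Pid I (Finsupp.equivFunOnFinite.symm m) :=
    Finset.prod_congr rfl fun j _ => by
      rw [Finsupp.coe_equivFunOnFinite_symm]
  rw [h1, h2]
  refine hk _ _ (fun j => ?_) (fun j => ?_)
  · rw [Finsupp.coe_equivFunOnFinite_symm]; exact hn j
  · rw [Finsupp.coe_equivFunOnFinite_symm]; exact hm j
end

section
/- Let R be a commutative Noetherian ring, I an ideal, and M a finitely generated R-module. Then the union over all n ∈ ℕ of Ass_R(M/I^n M) is a finite set. -/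
open Submodule

section exact

variable {R A B C : Type*} [CommRing R] [AddCommGroup A] [AddCommGroup B] [AddCommGroup C]
  [Module R A] [Module R B] [Module R C]

lemma associatedPrimes_subset_union_of_exact (f : A →ₗ[R] B) (g : B →ₗ[R] C)
    (hf : Function.Injective f) (hfg : LinearMap.range f = LinearMap.ker g) :
    associatedPrimes R B ⊆ associatedPrimes R A ∪ associatedPrimes R C :=
  associatedPrimes.subset_union_of_exact hf (LinearMap.exact_iff.mpr hfg.symm)

end exact

section finiteness

lemma colon_bot_singleton_eq_annihilator {R M : Type*} [CommRing R] [AddCommGroup M] [Module R M]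
    (x : M) : (⊥ : Submodule R M).colon {x} = (span R {x}).annihilator := by
  ext r
  rw [mem_colon_singleton, mem_bot, mem_annihilator_span_singleton]

lemma associatedPrimes_finite (R M : Type*) [CommRing R] [IsNoetherianRing R] [AddCommGroup M]
    [Module R M] [Module.Finite R M] : (associatedPrimes R M).Finite := by
  suffices H : ∀ N : Submodule R M, (associatedPrimes R (M ⧸ N)).Finite by
    have := H ⊥
    rwa [LinearEquiv.AssociatedPrimes.eq (Submodule.quotEquivOfEqBot ⊥ rfl)] at this
  by_contra hcon
  push_neg at hcon
  obtain ⟨N₀, hN₀⟩ := hcon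
  obtain ⟨N, hN, hmax⟩ := (set_has_maximal_iff_noetherian.mpr inferInstance)
    {N : Submodule R M | ¬(associatedPrimes R (M ⧸ N)).Finite} ⟨N₀, hN₀⟩
  apply hN
  rcases subsingleton_or_nontrivial (M ⧸ N) with hs | hnt
  · rw [associatedPrimes.eq_empty_of_subsingleton]
    exact Set.finite_empty
  · obtain ⟨p, hp0⟩ := associatedPrimes.nonempty R (M ⧸ N)
    obtain ⟨hp, xbar, hx⟩ := isAssociatedPrime_iff.mp hp0
    rw [colon_bot_singleton_eq_annihilator] at hx
    set f := LinearMap.toSpanSingleton R (M ⧸ N) xbar with hf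
    have hker : LinearMap.ker f = p := by
      ext r
      rw [hx, LinearMap.mem_ker, mem_annihilator_span_singleton, hf,
        LinearMap.toSpanSingleton_apply]
    set A := LinearMap.range f with hA
    set N' := comap N.mkQ A with hN'
    have hxA : xbar ∈ A := ⟨1, one_smul R xbar⟩
    have hNN' : N ≤ N' := fun y hy => by
      rw [hN', mem_comap, N.mkQ_apply, (Submodule.Quotient.mk_eq_zero N).mpr hy]
      exact zero_mem A
    have hmapA : Submodule.map N.mkQ N' = A :=
      map_comap_eq_of_surjective (N.mkQ_surjective) A
    obtain ⟨x, rfl⟩ := N.mkQ_surjective xbar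
    have hxN : x ∉ N := by
      intro hxN
      apply hp.ne_top
      rw [hx, N.mkQ_apply, (Submodule.Quotient.mk_eq_zero N).mpr hxN, Submodule.span_zero_singleton,
        Submodule.annihilator_bot]
    have hxN' : x ∈ N' := mem_comap.mpr hxA
    have hlt : N < N' := lt_of_le_of_ne hNN' (fun e => hxN (by rw [e]; exact hxN'))
    have hfin' : (associatedPrimes R (M ⧸ N')).Finite := by
      by_contra hc
      exact hmax N' hc hlt
    have hAss := associatedPrimes_subset_union_of_exact A.subtype A.mkQ
      (injective_subtype A) (by rw [range_subtype, ker_mkQ])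
    refine Set.Finite.subset (Set.Finite.union ?_ ?_) hAss
    · have e1 : associatedPrimes R ↥A = associatedPrimes R (R ⧸ p) := by
        rw [← hker]
        exact (LinearEquiv.AssociatedPrimes.eq f.quotKerEquivRange).symm
      rw [e1, associatedPrimes.eq_singleton_of_isPrimary hp.isPrimary, hp.radical]
      exact Set.finite_singleton _
    · rw [← hmapA,
        LinearEquiv.AssociatedPrimes.eq (quotientQuotientEquivQuotient N N' hNN')]
      exact hfin'

end finiteness

section comap

variable {R S N : Type*} [CommRing R] [CommRing S] [Algebra R S] [IsNoetherianRing S]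
  [IsNoetherianRing R]
  [AddCommGroup N] [Module R N] [Module S N] [IsScalarTower R S N]

lemma associatedPrimes_subset_image_comap :
    associatedPrimes R N ⊆ (Ideal.comap (algebraMap R S)) '' associatedPrimes S N := by
  rintro p hp0
  obtain ⟨hp, x, hx⟩ := isAssociatedPrime_iff.mp hp0
  rw [colon_bot_singleton_eq_annihilator] at hx
  have hcomm : ∀ (c : R) (s : S) (z : N), c • s • z = s • c • z := fun c s z => by
    rw [← algebraMap_smul S c (s • z), ← mul_smul, mul_comm, mul_smul, algebraMap_smul]
  obtain ⟨P, ⟨y, hy1, rfl⟩, hmax⟩ := (set_has_maximal_iff_noetherian.mpr inferInstance)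
    {J : Ideal S | ∃ y : N, (span R {y}).annihilator = p ∧ J = (span S {y}).annihilator}
    ⟨(span S {x}).annihilator, x, hx.symm, rfl⟩
  have hy0 : y ≠ 0 := by
    intro e
    apply hp.ne_top
    rw [← hy1, e, Submodule.span_zero_singleton, Submodule.annihilator_bot]
  have stepA : ∀ (b : S) (z : N),
      (span S {z}).annihilator ≤ (span S {b • z}).annihilator := by
    intro b z u hu
    rw [mem_annihilator_span_singleton] at hu ⊢
    rw [← mul_smul, mul_comm, mul_smul, hu, smul_zero]
  have fact1 : ∀ c : R, c ∉ p → (span R {c • y}).annihilator = p := by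
    intro c hc
    ext r
    rw [mem_annihilator_span_singleton]
    constructor
    · intro hr
      rw [← mul_smul] at hr
      have hmem : r * c ∈ p := hy1 ▸ (mem_annihilator_span_singleton y (r * c)).mpr hr
      exact (hp.mem_or_mem hmem).resolve_right hc
    · intro hr
      have : r • y = 0 := (mem_annihilator_span_singleton y r).mp (hy1 ▸ hr)
      rw [smul_comm, this, smul_zero]
  have fact2 : ∀ c : R, c ∉ p → (span S {c • y}).annihilator = (span S {y}).annihilator := by
    intro c hc
    have hle : (span S {y}).annihilator ≤ (span S {c • y}).annihilator := by
      have := stepA (algebraMap R S c) y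
      rwa [algebraMap_smul] at this
    exact ((hle.lt_or_eq).resolve_left (hmax _ ⟨c • y, fact1 c hc, rfl⟩)).symm
  have key1 : ∀ b : S, b • y ≠ 0 → (span R {b • y}).annihilator = p := by
    intro b hb
    ext r
    rw [mem_annihilator_span_singleton]
    constructor
    · intro hr
      by_contra hrp
      apply hb
      have hby : b • r • y = 0 := by rw [← hcomm]; exact hr
      have : b ∈ (span S {r • y}).annihilator :=
        (mem_annihilator_span_singleton (r • y) b).mpr hby
      rw [fact2 r hrp, mem_annihilator_span_singleton] at this
      exact this
    · intro hr
      have : r • y = 0 := (mem_annihilator_span_singleton y r).mp (hy1 ▸ hr)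
      rw [hcomm, this, smul_zero]
  have key2 : ∀ b : S, b • y ≠ 0 →
      (span S {b • y}).annihilator = (span S {y}).annihilator := by
    intro b hb
    exact (((stepA b y).lt_or_eq).resolve_left (hmax _ ⟨b • y, key1 b hb, rfl⟩)).symm
  have hprime : ((span S {y}).annihilator).IsPrime := by
    constructor
    · intro e
      rw [Submodule.annihilator_eq_top_iff, Submodule.span_singleton_eq_bot] at e
      exact hy0 e
    · intro a b hab
      by_cases hb : b ∈ (span S {y}).annihilator
      · exact Or.inr hb
      · left
        have hbne : b • y ≠ 0 := fun e => hb ((mem_annihilator_span_singleton y b).mpr e)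
        rw [← key2 b hbne, mem_annihilator_span_singleton, ← mul_smul]
        exact (mem_annihilator_span_singleton y (a * b)).mp hab
  refine ⟨(span S {y}).annihilator, isAssociatedPrime_iff.mpr
    ⟨hprime, y, (colon_bot_singleton_eq_annihilator y).symm⟩, ?_⟩
  ext r
  rw [Ideal.mem_comap, mem_annihilator_span_singleton, algebraMap_smul, ← hy1,
    mem_annihilator_span_singleton]

end comap

section bridge

lemma bridge_finite {R S P M : Type*} [CommRing R] [CommRing S] [Algebra R S] [IsNoetherianRing R]
    [IsNoetherianRing S] [AddCommGroup M] [Module R M] [AddCommGroup P] [Module R P]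
    [Module S P] [IsScalarTower R S P]
    (I : Ideal R) (lsing : ℕ → M →ₗ[R] P) (N : Submodule S P) (hN : N.FG)
    (hmem : ∀ (n : ℕ) (x : M), x ∈ I ^ n • (⊤ : Submodule R M) → lsing n x ∈ N)
    (hker : ∀ (n : ℕ) (x : M), x ∈ I ^ n • (⊤ : Submodule R M) →
      (lsing n x ∈ (I.map (algebraMap R S)) • N ↔ x ∈ I ^ (n + 1) • (⊤ : Submodule R M))) :
    (⋃ n : ℕ, associatedPrimes R (M ⧸ (I ^ n • (⊤ : Submodule R M)))).Finite := by
  set J := I.map (algebraMap R S) with hJ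
  set W : Submodule S ↥N := J • ⊤ with hW
  haveI : Module.Finite S ↥N := Module.Finite.iff_fg.mpr hN
  haveI : Module.Finite S (↥N ⧸ W) := Module.Finite.quotient S W
  set T := (Ideal.comap (algebraMap R S)) '' associatedPrimes S (↥N ⧸ W) with hT
  have hTfin : T.Finite := (associatedPrimes_finite S (↥N ⧸ W)).image _
  have hWmem : ∀ z : ↥N, z ∈ W ↔ (z : P) ∈ J • N := by
    intro z
    constructor
    · intro hz
      have h2 := Submodule.mem_map_of_mem (f := N.subtype) hz
      rwa [Submodule.map_smul'', Submodule.map_subtype_top] at h2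
    · intro hz
      have h2 : (z : P) ∈ Submodule.map N.subtype W := by
        rwa [hW, Submodule.map_smul'', Submodule.map_subtype_top]
      obtain ⟨w, hw, he⟩ := h2
      have : w = z := Subtype.ext he
      rwa [← this]
  have key : ∀ n : ℕ, associatedPrimes R (M ⧸ (I ^ n • (⊤ : Submodule R M))) ⊆ T := by
    intro n
    induction n with
    | zero =>
      haveI : Subsingleton (M ⧸ (I ^ 0 • (⊤ : Submodule R M))) := by
        rw [Submodule.Quotient.subsingleton_iff, pow_zero, Ideal.one_eq_top,
          Submodule.top_smul]
      rw [associatedPrimes.eq_empty_of_subsingleton]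
      exact Set.empty_subset T
    | succ n ih =>
      set Pn := I ^ n • (⊤ : Submodule R M) with hPn
      set Pn1 := I ^ (n + 1) • (⊤ : Submodule R M) with hPn1
      have hPle : Pn1 ≤ Pn := by
        rw [hPn1, hPn, pow_succ, ← smul_eq_mul, Submodule.smul_assoc]
        exact Submodule.smul_mono le_rfl le_top
      set Kn : Submodule R ↥Pn := comap Pn.subtype Pn1 with hKn
      have hle : Kn = LinearMap.ker (Pn1.mkQ ∘ₗ Pn.subtype) := by
        rw [LinearMap.ker_comp, ker_mkQ]
      set f : (↥Pn ⧸ Kn) →ₗ[R] M ⧸ Pn1 := liftQ Kn (Pn1.mkQ ∘ₗ Pn.subtype) hle.le with hf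
      set g : (M ⧸ Pn1) →ₗ[R] M ⧸ Pn := liftQ Pn1 Pn.mkQ (by rw [ker_mkQ]; exact hPle) with hg
      have hfinj : Function.Injective f := by
        rw [← LinearMap.ker_eq_bot]
        exact ker_liftQ_eq_bot _ _ _ hle.ge
      have hrange : LinearMap.range f = LinearMap.ker g := by
        rw [hf, hg, range_liftQ, ker_liftQ, ker_mkQ, LinearMap.range_comp, range_subtype]
      have hexact := associatedPrimes_subset_union_of_exact f g hfinj hrange
      -- embedding of ↥Pn ⧸ Kn into ↥N ⧸ W
      set c0 : ↥Pn →ₗ[R] ↥(N.restrictScalars R) :=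
        LinearMap.codRestrict (N.restrictScalars R) (lsing n ∘ₗ Pn.subtype)
          (fun z => hmem n z z.2) with hc0
      set e : ↥(N.restrictScalars R) ≃ₗ[R] ↥N :=
        LinearEquiv.restrictScalars R (Submodule.restrictScalarsEquiv R S P N) with he
      set χ : ↥Pn →ₗ[R] (↥N ⧸ W) :=
        (W.mkQ.restrictScalars R) ∘ₗ (e.toLinearMap ∘ₗ c0) with hχ
      have hχapply : ∀ z : ↥Pn, χ z = Submodule.Quotient.mk (e (c0 z)) := fun z => rfl
      have hkerχ : LinearMap.ker χ = Kn := by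
        ext z
        rw [LinearMap.mem_ker, hχapply, Submodule.Quotient.mk_eq_zero, hWmem]
        have hcoe : ((e (c0 z) : ↥N) : P) = lsing n (z : M) := rfl
        rw [hcoe, hker n (z : M) z.2, hKn, mem_comap]
        rfl
      set χq : (↥Pn ⧸ Kn) →ₗ[R] (↥N ⧸ W) := liftQ Kn χ hkerχ.ge with hχq
      have hinj : Function.Injective χq := by
        rw [← LinearMap.ker_eq_bot]
        exact ker_liftQ_eq_bot _ _ _ hkerχ.le
      have h1 : associatedPrimes R (↥Pn ⧸ Kn) ⊆ T :=
        (associatedPrimes.subset_of_injective hinj).trans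
          associatedPrimes_subset_image_comap
      exact hexact.trans (Set.union_subset h1 ih)
  exact Set.Finite.subset hTfin (Set.iUnion_subset key)

end bridge

section aux

universe u

lemma aux_same_universe {R : Type u} [CommRing R] [IsNoetherianRing R] (I : Ideal R)
    (M : Type u) [AddCommGroup M] [Module R M] [Module.Finite R M] :
    (⋃ n : ℕ, associatedPrimes R (M ⧸ (I ^ n • (⊤ : Submodule R M)))).Finite := by
  set F := I.stableFiltration (⊤ : Submodule R M) with hF
  have hNfg : F.submodule.FG := by
    rw [Ideal.Filtration.submodule_fg_iff_stable]
    · exact I.stableFiltration_stable ⊤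
    · intro i
      exact IsNoetherian.noetherian _
  have hcommI : ∀ (K L : Ideal R) (W : Submodule R M), K • (L • W) = L • (K • W) := by
    intro K L W
    rw [← Submodule.smul_assoc, smul_eq_mul, mul_comm, ← smul_eq_mul, Submodule.smul_assoc]
  have hpow : ∀ n : ℕ, I ^ (n + 1) • (⊤ : Submodule R M) = I • (I ^ n • ⊤) := by
    intro n
    rw [pow_succ', ← smul_eq_mul, Submodule.smul_assoc]
  have hmem : ∀ (n : ℕ) (x : M), x ∈ I ^ n • (⊤ : Submodule R M) →
      PolynomialModule.lsingle R n x ∈ F.submodule := by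
    intro n x hx
    rw [Ideal.Filtration.mem_submodule]
    intro i
    rw [PolynomialModule.lsingle_apply]
    split_ifs with h
    · subst h
      exact hx
    · exact zero_mem _
  apply bridge_finite (S := reesAlgebra I) I (fun n => PolynomialModule.lsingle R n)
    F.submodule hNfg hmem
  intro n x hx
  constructor
  · intro h
    have hJN : (I.map (algebraMap R (reesAlgebra I))) • F.submodule ≤
        (I.stableFiltration (I • (⊤ : Submodule R M))).submodule := by
      rw [Submodule.smul_le]
      intro r hr fp hfp
      have hr' : r ∈ Ideal.span ((algebraMap R (reesAlgebra I)) '' ↑I) := hr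
      clear hr
      induction hr' using Submodule.span_induction with
      | mem s hs =>
        obtain ⟨a, haI, rfl⟩ := hs
        rw [algebraMap_smul]
        rw [Ideal.Filtration.mem_submodule]
        intro i
        have happ : (a • fp).coeff i = a • fp.coeff i := rfl
        rw [happ]
        have h3 : a • fp.coeff i ∈ I • (I ^ i • (⊤ : Submodule R M)) :=
          Submodule.smul_mem_smul haI ((F.mem_submodule fp).mp hfp i)
        rw [hcommI] at h3
        exact h3
      | zero => rw [zero_smul]; exact zero_mem _
      | add s t _ _ ihs iht => rw [add_smul]; exact add_mem ihs iht
      | smul s t _ iht =>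
        rw [smul_eq_mul, mul_smul]
        exact Submodule.smul_mem _ s iht
    have h2 := ((I.stableFiltration (I • (⊤ : Submodule R M))).mem_submodule _).mp (hJN h) n
    have happ : (PolynomialModule.lsingle R n x).coeff n = x := by
      rw [PolynomialModule.lsingle_apply, if_pos rfl]
    rw [happ] at h2
    rw [hpow n, hcommI]
    exact h2
  · intro h
    rw [hpow n] at h
    refine Submodule.smul_induction_on h ?_ ?_
    · intro a ha z hz
      rw [(PolynomialModule.lsingle R n).map_smul, ← algebraMap_smul (reesAlgebra I) a]
      exact Submodule.smul_mem_smul (Ideal.mem_map_of_mem _ ha) (hmem n z hz)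
    · intro u v hu hv
      rw [map_add]
      exact add_mem hu hv

end aux

/-- The union over all `n ∈ ℕ` of the sets of associated primes of `M/IⁿM` is finite. -/
theorem finite_union_ass_quotient_powers (R : Type*) [CommRing R] [IsNoetherianRing R]
    (I : Ideal R) (M : Type*) [AddCommGroup M] [Module R M] [Module.Finite R M] :
    (⋃ n : ℕ, associatedPrimes R (M ⧸ (I ^ n • (⊤ : Submodule R M)))).Finite := by
  obtain ⟨k, f, hf⟩ := Module.Finite.exists_fin' R M
  have heq : ∀ n : ℕ, associatedPrimes R (M ⧸ (I ^ n • (⊤ : Submodule R M))) =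
      associatedPrimes R (((Fin k → R) ⧸ LinearMap.ker f) ⧸
        (I ^ n • (⊤ : Submodule R ((Fin k → R) ⧸ LinearMap.ker f)))) := by
    intro n
    refine (LinearEquiv.AssociatedPrimes.eq
      (Submodule.Quotient.equiv _ _ (f.quotKerEquivOfSurjective hf) ?_)).symm
    rw [Submodule.map_smul'', Submodule.map_top,
      LinearEquiv.range (f.quotKerEquivOfSurjective hf)]
  rw [Set.iUnion_congr heq]
  exact aux_same_universe I ((Fin k → R) ⧸ LinearMap.ker f)
end

section
/- Let R be a commutative Noetherian ring, I_1,...,I_t ideals, and let S = ⊕_{n ∈ ℕ^t} I_1^{n_1}⋯I_t^{n_t} be the ℕ^t-graded Rees ring. If L is a finitely generated ℕ^t-graded S-module, then the union over all n ∈ ℕ^t of Ass_R(L_n) (associated primes of the graded component L_n as an R-module) is a finite set. -/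
set_option synthInstance.maxHeartbeats 1000000

open MvPolynomial

variable (R : Type) [CommRing R]

/-- The `ℕᵗ`-graded (multi-)Rees algebra of a family of ideals `I : Fin t → Ideal R`,
realized as the subalgebra of `R[X₁,…,X_t]` of polynomials whose coefficient of the
monomial `X^d` lies in `I₁^{d₁}⋯I_t^{d_t}`. -/
def multiReesAlgebra (t : ℕ) (I : Fin t → Ideal R) :
    Subalgebra R (MvPolynomial (Fin t) R) where
  carrier := {p | ∀ d : Fin t →₀ ℕ, p.coeff d ∈ ∏ j, I j ^ d j}
  add_mem' := fun {a b} ha hb d => by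
    rw [coeff_add]; exact add_mem (ha d) (hb d)
  mul_mem' := fun {a b} ha hb d => by
    classical
    rw [coeff_mul]
    refine Submodule.sum_mem _ fun x hx => ?_
    have hxd : x.1 + x.2 = d := Finset.HasAntidiagonal.mem_antidiagonal.mp hx
    have : (∏ j, I j ^ x.1 j) * (∏ j, I j ^ x.2 j) ≤ ∏ j, I j ^ d j := by
      rw [← Finset.prod_mul_distrib]
      refine le_of_eq (Finset.prod_congr rfl fun j _ => ?_)
      rw [← pow_add, ← hxd]; rfl
    exact this (Ideal.mul_mem_mul (ha x.1) (hb x.2))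
  algebraMap_mem' := fun r d => by
    classical
    rw [algebraMap_eq, coeff_C]
    split_ifs with h
    · subst h
      simp [Ideal.top_pow]
    · exact Submodule.zero_mem _
  one_mem' := by
    intro d
    rw [coeff_one]
    split_ifs with h
    · subst h; simp [Ideal.top_pow]
    · exact Submodule.zero_mem _
  zero_mem' := fun d => by rw [coeff_zero]; exact Submodule.zero_mem _

/-- The `ℕᵗ`-grading on the multi-Rees algebra: the degree-`n` component consists of the
elements supported on the single monomial `X^n` (with coefficient in `I^n`). -/
def multiReesGrading (t : ℕ) (I : Fin t → Ideal R) (n : Fin t → ℕ) :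
    Submodule R (multiReesAlgebra R t I) where
  carrier := {s | ∀ d : Fin t →₀ ℕ, d ≠ Finsupp.equivFunOnFinite.symm n →
    (s : MvPolynomial (Fin t) R).coeff d = 0}
  add_mem' := fun {a b} ha hb d hd => by
    have : ((a + b : multiReesAlgebra R t I) : MvPolynomial (Fin t) R)
        = (a : MvPolynomial (Fin t) R) + b := rfl
    rw [this, coeff_add, ha d hd, hb d hd, add_zero]
  zero_mem' := fun d _ => by simp
  smul_mem' := fun c a ha d hd => by
    have : ((c • a : multiReesAlgebra R t I) : MvPolynomial (Fin t) R)
        = c • (a : MvPolynomial (Fin t) R) := rfl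
    rw [this, coeff_smul, ha d hd, smul_zero]

section General

variable {A B M : Type*} [CommRing A] [CommRing B] [Algebra A B]
  [AddCommGroup M] [Module A M] [Module B M] [IsScalarTower A B M]

lemma west_mem_iff (p : Ideal A) (N : Submodule B M) (y : N)
    (hy : p = (⊥ : Submodule A N).colon {y}) (r : A) :
    r ∈ p ↔ r • (y : M) = 0 := by
  rw [hy, Submodule.mem_colon_singleton, Submodule.mem_bot, ← Submodule.coe_smul_of_tower r y,
    ZeroMemClass.coe_eq_zero]

lemma west_ass_subset_union [IsNoetherianRing A] (N N' : Submodule B M) (h : N ≤ N') :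
    associatedPrimes A N' ⊆ associatedPrimes A N ∪ associatedPrimes A (N'.map N.mkQ) := by
  rintro p hp0
  obtain ⟨hp, y, hy⟩ := (AssociatedPrimes.mem_iff.trans isAssociatedPrime_iff).mp hp0
  have hmem : ∀ r : A, r ∈ p ↔ r • (y : M) = 0 := west_mem_iff p N' y hy
  by_cases hc : ∀ r : A, r • (y : M) ∈ N → r • (y : M) = 0
  · right
    refine (AssociatedPrimes.mem_iff.trans isAssociatedPrime_iff).mpr ⟨hp, ⟨N.mkQ (y : M), Submodule.mem_map_of_mem y.2⟩, ?_⟩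
    ext r
    rw [hmem, Submodule.mem_colon_singleton, Submodule.mem_bot, ← Subtype.coe_inj]
    have : ((r • (⟨N.mkQ (y : M), Submodule.mem_map_of_mem y.2⟩ :
        N'.map N.mkQ) : N'.map N.mkQ) : M ⧸ N) = r • N.mkQ (y : M) :=
      Submodule.coe_smul_of_tower r _
    rw [this, ZeroMemClass.coe_zero, ← (N.mkQ).map_smul_of_tower r (y : M),
      Submodule.mkQ_apply, Submodule.Quotient.mk_eq_zero]
    exact ⟨fun h0 => h0 ▸ N.zero_mem, fun hn => hc r hn⟩
  · left
    push_neg at hc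
    obtain ⟨r, hrN, hr0⟩ := hc
    have hrp : r ∉ p := fun hr => hr0 ((hmem r).mp hr)
    refine (AssociatedPrimes.mem_iff.trans isAssociatedPrime_iff).mpr ⟨hp, ⟨r • (y : M), hrN⟩, ?_⟩
    ext s
    rw [Submodule.mem_colon_singleton, Submodule.mem_bot, ← Subtype.coe_inj]
    have : ((s • (⟨r • (y : M), hrN⟩ : N) : N) : M) = s • (r • (y : M)) :=
      Submodule.coe_smul_of_tower s _
    rw [this, ZeroMemClass.coe_zero, smul_smul, ← hmem]
    exact ⟨fun hs => Ideal.mul_mem_right r p hs,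
      fun hs => (hp.mem_or_mem hs).resolve_right hrp⟩

lemma west_ass_span_singleton [IsNoetherianRing A] (P : Ideal B) (hP : P.IsPrime) (x : M)
    (hx : P = (⊥ : Submodule B M).colon {x}) :
    associatedPrimes A (Submodule.span B {x}) ⊆ {P.comap (algebraMap A B)} := by
  rintro q hq0
  obtain ⟨hq, y, hy⟩ := (AssociatedPrimes.mem_iff.trans isAssociatedPrime_iff).mp hq0
  have hmem : ∀ r : A, r ∈ q ↔ r • (y : M) = 0 := west_mem_iff q _ y hy
  have hPmem : ∀ s : B, s ∈ P ↔ s • x = 0 := fun s => by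
    rw [hx, Submodule.mem_colon_singleton, Submodule.mem_bot]
  obtain ⟨s, hs⟩ := Submodule.mem_span_singleton.mp y.2
  have hy0 : (y : M) ≠ 0 := by
    intro h0
    apply hq.ne_top
    rw [Ideal.eq_top_iff_one, hmem, h0, smul_zero]
  have hsP : s ∉ P := fun hsp => hy0 (hs ▸ (hPmem s).mp hsp)
  have : q = P.comap (algebraMap A B) := by
    ext r
    rw [hmem, Ideal.mem_comap, ← hs, ← smul_assoc, Algebra.smul_def, ← hPmem]
    constructor
    · intro hr
      exact (hP.mem_or_mem hr).resolve_right hsP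
    · intro hr
      exact Ideal.mul_mem_right s P hr
  simp [this]

theorem west_ass_finite (A : Type*) {B M : Type*} [CommRing A] [CommRing B] [Algebra A B]
    [IsNoetherianRing A] [IsNoetherianRing B] [AddCommGroup M] [Module A M] [Module B M] [IsScalarTower A B M]
    [Module.Finite B M] : (associatedPrimes A M).Finite := by
  have hN : IsNoetherian B M := inferInstance
  obtain ⟨N, hNmem, hNmax⟩ := set_has_maximal_iff_noetherian.mpr hN
    {N : Submodule B M | (associatedPrimes A N).Finite}
    ⟨⊥, by
      show (associatedPrimes A (⊥ : Submodule B M)).Finite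
      rw [associatedPrimes.eq_empty_of_subsingleton]; exact Set.finite_empty⟩
  simp only [Set.mem_setOf_eq] at hNmem
  rcases eq_or_ne N ⊤ with rfl | hne
  · rwa [LinearEquiv.AssociatedPrimes.eq
      ((Submodule.topEquiv : (⊤ : Submodule B M) ≃ₗ[B] M).restrictScalars A)] at hNmem
  · exfalso
    have : Nontrivial (M ⧸ N) := Submodule.Quotient.nontrivial_iff.mpr hne
    obtain ⟨P, hP0⟩ := associatedPrimes.nonempty B (M ⧸ N)
    obtain ⟨hP, xb, hxb⟩ := (AssociatedPrimes.mem_iff.trans isAssociatedPrime_iff).mp hP0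
    obtain ⟨x, rfl⟩ := N.mkQ_surjective xb
    have hxN : x ∉ N := by
      intro hxN
      apply hP.ne_top
      rw [hxb, show N.mkQ x = 0 from (Submodule.Quotient.mk_eq_zero N).mpr hxN]
      rw [Submodule.colon_singleton_zero]
    set N' := N ⊔ Submodule.span B {x} with hN'
    have hle : N ≤ N' := le_sup_left
    have hlt : N < N' := lt_of_le_of_ne hle fun e => hxN
      (e ▸ Submodule.mem_sup_right (Submodule.mem_span_singleton_self x))
    refine hNmax N' ?_ hlt
    show (associatedPrimes A N').Finite
    have hmap : N'.map N.mkQ = Submodule.span B {N.mkQ x} := by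
      rw [hN', Submodule.map_sup, Submodule.map_span, Set.image_singleton]
      have : N.map N.mkQ = ⊥ := by
        rw [eq_bot_iff]
        rintro _ ⟨z, hz, rfl⟩
        simpa [Submodule.mem_bot, Submodule.mkQ_apply] using
          (Submodule.Quotient.mk_eq_zero N).mpr hz
      rw [this, bot_sup_eq]
    refine Set.Finite.subset (hNmem.union (Set.finite_singleton (P.comap (algebraMap A B))))
      ((west_ass_subset_union N N' hle).trans (Set.union_subset_union_right _ ?_))
    rw [hmap]
    exact west_ass_span_singleton P hP _ hxb

end General

section Noeth
variable {R}

lemma multiRees_prod_single (t : ℕ) (I : Fin t → Ideal R) (j : Fin t) :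
    ∏ j', I j' ^ (Finsupp.single j (1:ℕ)) j' = I j := by
  classical
  rw [Finset.prod_eq_single j (fun b _ hb => by
      rw [Finsupp.single_eq_of_ne' (Ne.symm hb), pow_zero])
    (fun h => absurd (Finset.mem_univ j) h)]
  rw [Finsupp.single_eq_same, pow_one]

lemma multiRees_monomial_mem_adjoin (t : ℕ) (I : Fin t → Ideal R) :
    ∀ (n : ℕ) (d : Fin t →₀ ℕ), (d.sum fun _ m => m) = n →
      ∀ r ∈ ∏ j, I j ^ d j,
      monomial d r ∈ Algebra.adjoin R
        (⋃ j : Fin t,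
          (fun a => (monomial (Finsupp.single j 1) a : MvPolynomial (Fin t) R)) ''
            (I j : Set R)) := by
  classical
  intro n
  induction n using Nat.strong_induction_on with
  | _ n ih =>
    intro d hd r hr
    rcases eq_or_ne d 0 with rfl | hd0
    · rw [monomial_zero', ← algebraMap_eq]
      exact Subalgebra.algebraMap_mem _ r
    · obtain ⟨j, hj⟩ : ∃ j, d j ≠ 0 := by
        by_contra h
        push_neg at h
        exact hd0 (Finsupp.ext fun j => h j)
      set d' := d - Finsupp.single j 1 with hd'def
      have hdd : d = Finsupp.single j 1 + d' := by
        ext k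
        rw [Finsupp.add_apply, hd'def, Finsupp.tsub_apply]
        rcases eq_or_ne k j with rfl | hk
        · rw [Finsupp.single_eq_same]
          omega
        · rw [Finsupp.single_eq_of_ne' (Ne.symm hk)]
          omega
      have hsum : (d'.sum fun _ m => m) < n := by
        have : (d.sum fun _ m => m) =
            ((Finsupp.single j 1).sum fun _ m => m) + (d'.sum fun _ m => m) := by
          rw [hdd]
          exact Finsupp.sum_add_index' (fun _ => rfl) (fun _ _ _ => rfl)
        rw [Finsupp.sum_single_index rfl] at this
        omega
      have hprod : ∏ j', I j' ^ d j' = I j * ∏ j', I j' ^ d' j' := by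
        have : ∏ j', I j' ^ d j'
            = ∏ j', (I j' ^ (Finsupp.single j (1:ℕ)) j' * I j' ^ d' j') := by
          refine Finset.prod_congr rfl fun j' _ => ?_
          conv_lhs => rw [hdd]
          rw [Finsupp.add_apply, pow_add]
        rw [this, Finset.prod_mul_distrib, multiRees_prod_single t I j]
      rw [hprod] at hr
      rw [hdd]
      refine Submodule.mul_induction_on hr (fun a ha b hb => ?_) (fun x y hx hy => ?_)
      · rw [← monomial_mul]
        exact Subalgebra.mul_mem _
          (Algebra.subset_adjoin (Set.mem_iUnion.mpr ⟨j, Set.mem_image_of_mem _ ha⟩))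
          (ih _ hsum d' rfl b hb)
      · rw [map_add]
        exact add_mem hx hy

lemma multiReesAlgebra_eq_adjoin (t : ℕ) (I : Fin t → Ideal R) :
    multiReesAlgebra R t I = Algebra.adjoin R
      (⋃ j : Fin t,
        (fun a => (monomial (Finsupp.single j 1) a : MvPolynomial (Fin t) R)) ''
          (I j : Set R)) := by
  apply le_antisymm
  · intro p hp
    rw [p.as_sum]
    exact Subalgebra.sum_mem _ fun d _ =>
      multiRees_monomial_mem_adjoin t I _ d rfl _ (hp d)
  · apply Algebra.adjoin_le
    rintro _ ⟨_, ⟨j, rfl⟩, a, ha, rfl⟩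
    intro d
    rw [coeff_monomial]
    split_ifs with h
    · rw [← h, multiRees_prod_single t I j]
      exact ha
    · exact Submodule.zero_mem _

lemma multiReesAlgebra_fg [IsNoetherianRing R] (t : ℕ) (I : Fin t → Ideal R) :
    (multiReesAlgebra R t I).FG := by
  classical
  choose s hs using fun j => (IsNoetherian.noetherian (I j) : (I j).FG)
  refine ⟨Finset.univ.biUnion fun j =>
    (s j).image (fun a => (monomial (Finsupp.single j 1) a : MvPolynomial (Fin t) R)), ?_⟩
  rw [multiReesAlgebra_eq_adjoin]
  apply le_antisymm
  · apply Algebra.adjoin_le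
    intro x hx
    simp only [Finset.coe_biUnion, Finset.coe_univ, Set.mem_univ, Set.iUnion_true,
      Finset.coe_image, Set.mem_iUnion, Set.mem_image] at hx
    obtain ⟨j, a, ha, rfl⟩ := hx
    exact Algebra.subset_adjoin (Set.mem_iUnion.mpr
      ⟨j, Set.mem_image_of_mem _ (by rw [← hs j]; exact Ideal.subset_span ha)⟩)
  · apply Algebra.adjoin_le
    rintro _ ⟨_, ⟨j, rfl⟩, a, ha, rfl⟩
    have ha' : a ∈ Submodule.span R (s j : Set R) := by
      rw [show Submodule.span R (s j : Set R) = I j from hs j]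
      exact ha
    have : (monomial (Finsupp.single j 1) a : MvPolynomial (Fin t) R) ∈
        Submodule.map (monomial (Finsupp.single j (1:ℕ)) :
          R →ₗ[R] MvPolynomial (Fin t) R) (Submodule.span R (s j : Set R)) :=
      Submodule.mem_map_of_mem ha'
    rw [Submodule.map_span] at this
    have hspan : Submodule.span R ((monomial (Finsupp.single j (1:ℕ)) :
          R →ₗ[R] MvPolynomial (Fin t) R) '' (s j : Set R)) ≤
        Subalgebra.toSubmodule (Algebra.adjoin R
          ((Finset.univ.biUnion fun j => Finset.image
            (fun a => (monomial (Finsupp.single j 1) a : MvPolynomial (Fin t) R)) (s j) :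
              Finset (MvPolynomial (Fin t) R)) : Set (MvPolynomial (Fin t) R))) := by
      rw [Submodule.span_le]
      rintro z ⟨a', ha', rfl⟩
      apply Algebra.subset_adjoin
      simp only [Finset.coe_biUnion, Finset.coe_univ, Set.mem_univ, Set.iUnion_true,
        Finset.coe_image, Set.mem_iUnion, Set.mem_image]
      exact ⟨j, a', ha', rfl⟩
    exact hspan this

instance multiRees_noetherian [IsNoetherianRing R] (t : ℕ) (I : Fin t → Ideal R) :
    IsNoetherianRing (multiReesAlgebra R t I) := by
  have : Algebra.FiniteType R (multiReesAlgebra R t I) :=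
    ⟨(Subalgebra.fg_top _).mpr (multiReesAlgebra_fg t I)⟩
  exact Algebra.FiniteType.isNoetherianRing R _

end Noeth

/-- **West's finiteness lemma.** If `L` is a finitely generated `ℕᵗ`-graded module over
the multigraded Rees ring `S = ⊕ₙ I₁^{n₁}⋯I_t^{n_t}` of ideals of a commutative
Noetherian ring `R`, with graded components `ℒ n`, then the union over all `n ∈ ℕᵗ` of
the sets of associated primes `Ass_R (ℒ n)` is finite. -/
theorem west_finite_union_ass [IsNoetherianRing R] (t : ℕ) (I : Fin t → Ideal R)
    (L : Type) [AddCommGroup L] [Module R L] [Module (multiReesAlgebra R t I) L]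
    [IsScalarTower R (multiReesAlgebra R t I) L]
    [Module.Finite (multiReesAlgebra R t I) L]
    (ℒ : (Fin t → ℕ) → Submodule R L) [DirectSum.Decomposition ℒ]
    [SetLike.GradedSMul (multiReesGrading R t I) ℒ] :
    (⋃ n : Fin t → ℕ, associatedPrimes R (ℒ n)).Finite := by
  have hfin : (associatedPrimes R L).Finite :=
    west_ass_finite R (B := multiReesAlgebra R t I) (M := L)
  refine hfin.subset (Set.iUnion_subset fun n => ?_)
  exact fun p hp =>
    associatedPrimes.subset_of_injective (f := (ℒ n).subtype) (Submodule.injective_subtype _) hp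
end

section
/- Let R be a commutative Noetherian ring, I_1,...,I_t ideals, and S the ℕ^t-graded Rees ring ⊕_{n ∈ ℕ^t} I_1^{n_1}⋯I_t^{n_t}. If L is a finitely generated ℕ^t-graded S-module, then either L_n = 0 for all sufficiently large n (componentwise), or L_n ≠ 0 for all sufficiently large n. -/
set_option synthInstance.maxHeartbeats 1000000

open MvPolynomial

variable (R : Type) [CommRing R]

section WestAux

open Finsupp DirectSum

variable {R}

/-- The homogeneous element `r·Xᵃ` of the multi-Rees algebra. -/
private noncomputable def homogElem (t : ℕ) (I : Fin t → Ideal R) (a : Fin t → ℕ) (r : R)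
    (hr : r ∈ ∏ j, I j ^ a j) : multiReesAlgebra R t I :=
  ⟨monomial (Finsupp.equivFunOnFinite.symm a) r, by
    intro d
    rw [coeff_monomial]
    split_ifs with h
    · subst h; simpa using hr
    · exact zero_mem _⟩

private lemma homogElem_mem (t : ℕ) (I : Fin t → Ideal R) (a : Fin t → ℕ) (r : R)
    (hr : r ∈ ∏ j, I j ^ a j) :
    homogElem t I a r hr ∈ multiReesGrading R t I a := by
  intro d hd
  show coeff d (monomial (Finsupp.equivFunOnFinite.symm a) r) = 0
  rw [coeff_monomial, if_neg fun h => hd h.symm]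

private lemma homog_eq_monomial (t : ℕ) (I : Fin t → Ideal R) (a : Fin t → ℕ)
    (s : multiReesAlgebra R t I) (hs : s ∈ multiReesGrading R t I a) :
    (s : MvPolynomial (Fin t) R)
      = monomial (Finsupp.equivFunOnFinite.symm a)
          ((s : MvPolynomial (Fin t) R).coeff (Finsupp.equivFunOnFinite.symm a)) := by
  apply MvPolynomial.ext
  intro d
  rcases eq_or_ne d (Finsupp.equivFunOnFinite.symm a) with h | h
  · subst h; rw [coeff_monomial, if_pos rfl]
  · rw [hs d h, coeff_monomial, if_neg fun hh => h hh.symm]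

/-- Key step: a homogeneous element of degree `b + c` kills anything in `ℒ m`
provided `ℒ (c + m) = ⊥`, because it factors through degree `c` elements. -/
private lemma key_smul_zero (t : ℕ) (I : Fin t → Ideal R)
    {L : Type} [AddCommGroup L] [Module R L] [Module (multiReesAlgebra R t I) L]
    (ℒ : (Fin t → ℕ) → Submodule R L)
    [SetLike.GradedSMul (multiReesGrading R t I) ℒ]
    (b c m : Fin t → ℕ) (s : multiReesAlgebra R t I)
    (hs : s ∈ multiReesGrading R t I (b + c))
    (y : L) (hy : y ∈ ℒ m) (h0 : ℒ (c + m) = ⊥) : s • y = 0 := by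
  classical
  set B : Fin t →₀ ℕ := Finsupp.equivFunOnFinite.symm (b + c) with hB
  have hr : (s : MvPolynomial (Fin t) R).coeff B
      ∈ (∏ j, I j ^ b j) * (∏ j, I j ^ c j) := by
    have hprod : (∏ j, I j ^ (B j)) = (∏ j, I j ^ b j) * (∏ j, I j ^ c j) := by
      rw [← Finset.prod_mul_distrib]
      refine Finset.prod_congr rfl fun j _ => ?_
      have hBj : B j = b j + c j := by simp [hB]
      rw [hBj, pow_add]
    exact hprod ▸ s.2 B
  rw [Submodule.mul_eq_span_mul_set, Submodule.mem_span_set'] at hr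
  obtain ⟨k, f, g, hsum⟩ := hr
  choose u hu v hv huv using fun i => Set.mem_mul.mp (g i).2
  have hU : ∀ i, f i * u i ∈ ∏ j, I j ^ b j := fun i => Ideal.mul_mem_left _ _ (hu i)
  have hsymm : Finsupp.equivFunOnFinite.symm b + Finsupp.equivFunOnFinite.symm c = B := by
    ext j; simp [hB]
  have hsrep : s = ∑ i, homogElem t I b (f i * u i) (hU i) * homogElem t I c (v i) (hv i) := by
    apply Subtype.ext
    rw [homog_eq_monomial t I (b + c) s hs, AddSubmonoidClass.coe_finset_sum]
    simp only [MulMemClass.coe_mul, homogElem, monomial_mul, hsymm]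
    rw [← map_sum (monomial B)]
    congr 1
    symm
    calc ∑ i, f i * u i * v i = ∑ i, f i • (g i : R) := by
          refine Finset.sum_congr rfl fun i _ => ?_
          rw [smul_eq_mul, mul_assoc, huv i]
      _ = (s : MvPolynomial (Fin t) R).coeff B := hsum
  rw [hsrep, Finset.sum_smul]
  refine Finset.sum_eq_zero fun i _ => ?_
  rw [mul_smul]
  have hmem : homogElem t I c (v i) (hv i) • y ∈ ℒ (c + m) :=
    SetLike.GradedSMul.smul_mem (homogElem_mem t I c (v i) (hv i)) hy
  rw [h0, Submodule.mem_bot] at hmem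
  rw [hmem, smul_zero]

/-- Every element of the multi-Rees algebra is a finite sum of homogeneous elements. -/
private lemma S_decomp (t : ℕ) (I : Fin t → Ideal R) (s : multiReesAlgebra R t I) :
    ∃ (A : Finset (Fin t →₀ ℕ)) (c : (Fin t →₀ ℕ) → multiReesAlgebra R t I),
      (∀ a ∈ A, c a ∈ multiReesGrading R t I ⇑a) ∧ s = ∑ a ∈ A, c a := by
  classical
  refine ⟨(s : MvPolynomial (Fin t) R).support, fun a =>
    ⟨monomial a ((s : MvPolynomial (Fin t) R).coeff a), fun d => by
      rw [coeff_monomial]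
      split_ifs with h
      · rw [← h]; exact s.2 a
      · exact zero_mem _⟩, fun a ha d hd => ?_, ?_⟩
  · show coeff d (monomial a _) = 0
    rw [coeff_monomial, if_neg]
    intro h
    exact hd (h.symm.trans (Finsupp.equivFunOnFinite_symm_coe a).symm)
  · apply Subtype.ext
    rw [AddSubmonoidClass.coe_finset_sum]
    exact (support_sum_monomial_coeff _).symm

private lemma exists_bound (t : ℕ) (I : Fin t → Ideal R)
    {L : Type} [AddCommGroup L] [Module R L] [Module (multiReesAlgebra R t I) L]
    [Module.Finite (multiReesAlgebra R t I) L]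
    (ℒ : (Fin t → ℕ) → Submodule R L) [DirectSum.Decomposition ℒ] :
    ∃ d : ℕ, Submodule.span (multiReesAlgebra R t I)
      {y : L | ∃ m : Fin t → ℕ, (∀ j, m j ≤ d) ∧ y ∈ ℒ m} = ⊤ := by
  classical
  obtain ⟨G, hG⟩ := Module.Finite.fg_top (R := multiReesAlgebra R t I) (M := L)
  refine ⟨G.sup fun g => (DirectSum.decompose ℒ g).support.sup fun m => Finset.univ.sup m, ?_⟩
  rw [eq_top_iff, ← hG, Submodule.span_le]
  intro g hg
  rw [SetLike.mem_coe]
  have h2 : (∑ m ∈ (DirectSum.decompose ℒ g).support, ((DirectSum.decompose ℒ g) m : L))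
      ∈ Submodule.span (multiReesAlgebra R t I)
        {y : L | ∃ m : Fin t → ℕ,
          (∀ j, m j ≤ G.sup fun g =>
            (DirectSum.decompose ℒ g).support.sup fun m => Finset.univ.sup m) ∧ y ∈ ℒ m} := by
    refine Submodule.sum_mem _ fun m hm => Submodule.subset_span ⟨m, fun j => ?_, SetLike.coe_mem _⟩
    calc m j ≤ Finset.univ.sup m := Finset.le_sup (Finset.mem_univ j)
      _ ≤ (DirectSum.decompose ℒ g).support.sup fun m => Finset.univ.sup m := Finset.le_sup hm
      _ ≤ _ := Finset.le_sup
          (f := fun g => (DirectSum.decompose ℒ g).support.sup fun m => Finset.univ.sup m)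
          (Finset.mem_coe.mp hg)
  exact (DirectSum.sum_support_decompose ℒ g) ▸ h2

/-- Vanishing propagation: if the components vanish at some `n` (componentwise bounding the
degrees of a homogeneous generating set), they vanish at all `n + e`. -/
private lemma propagate (t : ℕ) (I : Fin t → Ideal R)
    {L : Type} [AddCommGroup L] [Module R L] [Module (multiReesAlgebra R t I) L]
    (ℒ : (Fin t → ℕ) → Submodule R L) [DirectSum.Decomposition ℒ]
    [SetLike.GradedSMul (multiReesGrading R t I) ℒ]
    (d : ℕ)
    (hd : Submodule.span (multiReesAlgebra R t I)
      {y : L | ∃ m : Fin t → ℕ, (∀ j, m j ≤ d) ∧ y ∈ ℒ m} = ⊤)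
    (n : Fin t → ℕ) (hn : ∀ j, d ≤ n j) (h0 : ℒ n = ⊥) (e : Fin t → ℕ) :
    ℒ (n + e) = ⊥ := by
  classical
  rw [eq_bot_iff]
  intro x hx
  rw [Submodule.mem_bot]
  have hxT : x ∈ Submodule.span (multiReesAlgebra R t I)
      {y : L | ∃ m : Fin t → ℕ, (∀ j, m j ≤ d) ∧ y ∈ ℒ m} := hd ▸ Submodule.mem_top
  obtain ⟨k, f, g, hsum⟩ := Submodule.mem_span_set'.mp hxT
  choose m hm1 hm2 using fun i => (g i).2
  choose A c hc hce using fun i => S_decomp t I (f i)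
  set N : Fin t → ℕ := n + e with hN
  set P : L →+ L :=
    { toFun := fun z => ((DirectSum.decompose ℒ z) N : L)
      map_zero' := by simp
      map_add' := fun z w => by
        show ((DirectSum.decompose ℒ (z + w)) N : L)
          = ((DirectSum.decompose ℒ z) N : L) + ((DirectSum.decompose ℒ w) N : L)
        rw [DirectSum.decompose_add, DirectSum.add_apply, Submodule.coe_add] } with hP
  have hx2 : x = ∑ i, ∑ a ∈ A i, (c i a) • ((g i : L)) := by
    rw [← hsum]
    refine Finset.sum_congr rfl fun i _ => ?_
    rw [hce i, Finset.sum_smul]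
  have hPx : P x = x := DirectSum.decompose_of_mem_same ℒ hx
  have : x = ∑ i, ∑ a ∈ A i, P ((c i a) • ((g i : L))) := by
    conv_lhs => rw [← hPx, hx2]
    rw [map_sum]
    exact Finset.sum_congr rfl fun i _ => map_sum P _ _
  rw [this]
  refine Finset.sum_eq_zero fun i _ => Finset.sum_eq_zero fun a ha => ?_
  have hmem : (c i a) • ((g i : L)) ∈ ℒ (⇑a + m i) :=
    SetLike.GradedSMul.smul_mem (hc i a ha) (hm2 i)
  by_cases hEq : ⇑a + m i = N
  · have hP1 : P ((c i a) • ((g i : L))) = (c i a) • ((g i : L)) :=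
      DirectSum.decompose_of_mem_same ℒ (hEq ▸ hmem)
    rw [hP1]
    have hmn : ∀ j, m i j ≤ n j := fun j => le_trans (hm1 i j) (hn j)
    have hbc : ⇑a = e + fun j => n j - m i j := by
      funext j
      have h1 : a j + m i j = n j + e j := congrFun hEq j
      have h2 := hmn j
      simp only [Pi.add_apply]
      omega
    have h0' : ℒ ((fun j => n j - m i j) + m i) = ⊥ := by
      have : ((fun j => n j - m i j) + m i) = n := by
        funext j
        have := hmn j
        simp only [Pi.add_apply]
        omega
      rw [this]; exact h0
    exact key_smul_zero t I ℒ e (fun j => n j - m i j) (m i) (c i a)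
      (hbc ▸ hc i a ha) (g i : L) (hm2 i) h0'
  · show ((DirectSum.decompose ℒ ((c i a) • ((g i : L)))) N : L) = 0
    exact DirectSum.decompose_of_mem_ne ℒ hmem hEq

end WestAux

/-- **West's dichotomy theorem.** If `L` is a finitely generated `ℕᵗ`-graded module over
the multigraded Rees ring `S = ⊕ₙ I₁^{n₁}⋯I_t^{n_t}` of ideals of a commutative
Noetherian ring `R`, with graded components `ℒ n`, then either `ℒ n = 0` for all
sufficiently large `n` (componentwise), or `ℒ n ≠ 0` for all sufficiently large `n`. -/
theorem west_dichotomy [IsNoetherianRing R] (t : ℕ) (I : Fin t → Ideal R)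
    (L : Type) [AddCommGroup L] [Module R L] [Module (multiReesAlgebra R t I) L]
    [IsScalarTower R (multiReesAlgebra R t I) L]
    [Module.Finite (multiReesAlgebra R t I) L]
    (ℒ : (Fin t → ℕ) → Submodule R L) [DirectSum.Decomposition ℒ]
    [SetLike.GradedSMul (multiReesGrading R t I) ℒ] :
    (∃ k : ℕ, ∀ n : Fin t → ℕ, (∀ j, k ≤ n j) → ℒ n = ⊥) ∨
      (∃ k : ℕ, ∀ n : Fin t → ℕ, (∀ j, k ≤ n j) → ℒ n ≠ ⊥) := by
  classical
  obtain ⟨d, hd⟩ := exists_bound t I ℒ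
  by_cases h : ∃ n : Fin t → ℕ, (∀ j, d ≤ n j) ∧ ℒ n = ⊥
  · left
    obtain ⟨n, hn, h0⟩ := h
    refine ⟨Finset.univ.sup n, fun n' hn' => ?_⟩
    have hle : ∀ j, n j ≤ n' j := fun j =>
      le_trans (Finset.le_sup (Finset.mem_univ j)) (hn' j)
    have : n' = n + fun j => n' j - n j := by
      funext j
      have := hle j
      simp only [Pi.add_apply]
      omega
    rw [this]
    exact propagate t I ℒ d hd n hn h0 _
  · right
    push_neg at h
    exact ⟨d, fun n hn => h n hn⟩
end
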